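/- arXiv:2203.03052 — 4 statements merged into one kernel-verified Lean document; each statement's English description precedes it below -/
import Mathlib

section
/- Let A be a symmetric 2×2 matrix with integer entries and let N be a positive integer. Suppose c₁, c₂ ∈ ℝ² are such that there exist nonzero real numbers k, k' with sgn(k) = sgn(k'), c₁ᵀA = k·(1,0) and c₂ᵀA = k'·(0,−1). Let a = (a₁,a₂) ∈ ℚ² with 0 < a₁ < 1 and 0 < a₂ < 1, let b ∈ ℝ², and let τ ∈ ℍ. Assume that Σ_{n∈ℤ², n₁≥0, n₂≥0} |q|^{N·Q(n+a)} and Σ_{n∈ℤ², n₁<0, n₂<0} |q|^{N·Q(n+a)} are finite. Then Σ_{n∈ℤ², n₁≥0, n₂≥0} e^{2πi B(n,b)} q^{N·Q(n+a)} − Σ_{n∈ℤ², n₁<0, n₂<0} e^{2πi B(n,b)} q^{N·Q(n+a)} = (sgn(k)/2)·Σ_{n∈ℤ²} ( sgn(B(c₁, n+a)) − sgn(B(c₂, n+a)) ) e^{2πi B(n,b)} q^{N·Q(n+a)}. (This is the paper's Lemma expressing the graded trace T^{(N)}_{a,b}(τ) of the cone vertex algebra module as sgn(k)·e^{−2πiB(a,b)}/(2η(τ)²)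 times the indefinite theta function Θ_{a,b}(Nτ), with the eta factors cancelled.) -/
open Complex Real

/-- `qp τ c` is `q^c = e^{2πicτ}`. -/
noncomputable def qp (τ : ℂ) (c : ℝ) : ℂ := Complex.exp (2 * Real.pi * Complex.I * c * τ)

/-- `ph x = e^{2πix}` for real `x`. -/
noncomputable def ph (x : ℝ) : ℂ := Complex.exp (2 * Real.pi * Complex.I * x)

/-- The bilinear form `B(v,w) = vᵀ A w`. -/
noncomputable def Bf (A : Matrix (Fin 2) (Fin 2) ℝ) (v w : Fin 2 → ℝ) : ℝ :=
  dotProduct v (A.mulVec w)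

/-- The quadratic form `Q(v) = B(v,v)/2`. -/
noncomputable def Qf (A : Matrix (Fin 2) (Fin 2) ℝ) (v : Fin 2 → ℝ) : ℝ := Bf A v v / 2

/-- The point of `ℝ²` attached to `n ∈ ℤ²`. -/
noncomputable def vec (n : ℤ × ℤ) : Fin 2 → ℝ := ![(n.1 : ℝ), (n.2 : ℝ)]

lemma sign_mul_of_pos' (k x : ℝ) (hx : 0 < x) : Real.sign (k*x) = Real.sign k := by
  rcases lt_trichotomy k 0 with h|h|h
  · rw [Real.sign_of_neg (mul_neg_of_neg_of_pos h hx), Real.sign_of_neg h]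
  · simp [h]
  · rw [Real.sign_of_pos (mul_pos h hx), Real.sign_of_pos h]

lemma sign_mul_of_neg' (k x : ℝ) (hx : x < 0) : Real.sign (k*x) = -Real.sign k := by
  have h : k * x = -(k * (-x)) := by ring
  rw [h, Real.sign_neg, sign_mul_of_pos' k (-x) (by linarith)]

/-- The graded trace of the cone vertex algebra module equals
`sgn(k)·e^{-2πiB(a,b)}/(2η(τ)²)` times the indefinite theta `Θ_{a,b}(Nτ)`, written with the
eta factors cancelled: the paper's Lemma, for `0 < a₁, a₂ < 1`. -/
theorem cone_trace_eq_indefinite_theta_interior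
    (A : Matrix (Fin 2) (Fin 2) ℝ) (hA : A.IsSymm)
    (hAint : ∀ i j, ∃ m : ℤ, A i j = (m : ℝ))
    (N : ℕ) (hN : 0 < N)
    (c₁ c₂ : Fin 2 → ℝ) (k k' : ℝ) (hk : k ≠ 0) (hk' : k' ≠ 0)
    (hkk' : Real.sign k = Real.sign k')
    (hc₁ : Matrix.vecMul c₁ A = k • ![1, 0])
    (hc₂ : Matrix.vecMul c₂ A = k' • ![0, -1])
    (a : Fin 2 → ℝ) (haQ : ∀ i, ∃ r : ℚ, a i = (r : ℝ))
    (ha0 : 0 < a 0) (ha0' : a 0 < 1) (ha1 : 0 < a 1) (ha1' : a 1 < 1)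
    (b : Fin 2 → ℝ) (τ : ℂ) (hτ : 0 < τ.im)
    (hsum1 : Summable fun n : ℤ × ℤ =>
      if 0 ≤ n.1 ∧ 0 ≤ n.2 then ‖qp τ ((N : ℝ) * Qf A (vec n + a))‖ else 0)
    (hsum2 : Summable fun n : ℤ × ℤ =>
      if n.1 < 0 ∧ n.2 < 0 then ‖qp τ ((N : ℝ) * Qf A (vec n + a))‖ else 0) :
    (∑' n : ℤ × ℤ, if 0 ≤ n.1 ∧ 0 ≤ n.2 then
        ph (Bf A (vec n) b) * qp τ ((N : ℝ) * Qf A (vec n + a)) else 0) -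
      (∑' n : ℤ × ℤ, if n.1 < 0 ∧ n.2 < 0 then
        ph (Bf A (vec n) b) * qp τ ((N : ℝ) * Qf A (vec n + a)) else 0) =
    ((Real.sign k / 2 : ℝ) : ℂ) *
      ∑' n : ℤ × ℤ,
        ((Real.sign (Bf A c₁ (vec n + a)) - Real.sign (Bf A c₂ (vec n + a)) : ℝ) : ℂ) *
          (ph (Bf A (vec n) b) * qp τ ((N : ℝ) * Qf A (vec n + a))) := by

  set F : ℤ × ℤ → ℂ := fun n => ph (Bf A (vec n) b) * qp τ ((N : ℝ) * Qf A (vec n + a))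
    with hF
  have hnormF : ∀ n : ℤ × ℤ, ‖F n‖ = ‖qp τ ((N : ℝ) * Qf A (vec n + a))‖ := by
    intro n
    have : ‖ph (Bf A (vec n) b)‖ = 1 := by simp [ph, Complex.norm_exp]
    simp [hF, norm_mul, this]
  have hs1 : Summable fun n : ℤ × ℤ => if 0 ≤ n.1 ∧ 0 ≤ n.2 then F n else 0 := by
    apply Summable.of_norm
    have : (fun n : ℤ × ℤ => ‖if 0 ≤ n.1 ∧ 0 ≤ n.2 then F n else 0‖) =
        fun n : ℤ × ℤ => if 0 ≤ n.1 ∧ 0 ≤ n.2 then ‖qp τ ((N : ℝ) * Qf A (vec n + a))‖ else 0 := by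
      funext n; split <;> simp [hnormF n]
    rw [this]; exact hsum1
  have hs2 : Summable fun n : ℤ × ℤ => if n.1 < 0 ∧ n.2 < 0 then F n else 0 := by
    apply Summable.of_norm
    have : (fun n : ℤ × ℤ => ‖if n.1 < 0 ∧ n.2 < 0 then F n else 0‖) =
        fun n : ℤ × ℤ => if n.1 < 0 ∧ n.2 < 0 then ‖qp τ ((N : ℝ) * Qf A (vec n + a))‖ else 0 := by
      funext n; split <;> simp [hnormF n]
    rw [this]; exact hsum2
  -- Bilinear form evaluations
  have hB1 : ∀ w : Fin 2 → ℝ, Bf A c₁ w = k * w 0 := by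
    intro w
    rw [Bf, Matrix.dotProduct_mulVec, hc₁]
    simp [dotProduct, Fin.sum_univ_two]
  have hB2 : ∀ w : Fin 2 → ℝ, Bf A c₂ w = -k' * w 1 := by
    intro w
    rw [Bf, Matrix.dotProduct_mulVec, hc₂]
    simp [dotProduct, Fin.sum_univ_two]
  have hw0 : ∀ n : ℤ × ℤ, (vec n + a) 0 = (n.1 : ℝ) + a 0 := by
    intro n; simp [vec]
  have hw1 : ∀ n : ℤ × ℤ, (vec n + a) 1 = (n.2 : ℝ) + a 1 := by
    intro n; simp [vec]
  have hsq : Real.sign k * Real.sign k = 1 := by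
    rcases lt_or_gt_of_ne hk with h | h
    · rw [Real.sign_of_neg h]; norm_num
    · rw [Real.sign_of_pos h]; norm_num
  -- pointwise identity
  have key : ∀ n : ℤ × ℤ,
      (if 0 ≤ n.1 ∧ 0 ≤ n.2 then F n else 0) - (if n.1 < 0 ∧ n.2 < 0 then F n else 0) =
      ((Real.sign k / 2 : ℝ) : ℂ) *
        (((Real.sign (Bf A c₁ (vec n + a)) - Real.sign (Bf A c₂ (vec n + a)) : ℝ) : ℂ) * F n) := by
    intro n
    have e1 : Bf A c₁ (vec n + a) = k * ((n.1 : ℝ) + a 0) := by rw [hB1, hw0]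
    have e2 : Bf A c₂ (vec n + a) = -k' * ((n.2 : ℝ) + a 1) := by rw [hB2, hw1]
    rcases le_or_gt 0 n.1 with h1 | h1 <;> rcases le_or_gt 0 n.2 with h2 | h2
    · have p1 : (0:ℝ) < (n.1 : ℝ) + a 0 := by
        have : (0:ℝ) ≤ (n.1 : ℝ) := by exact_mod_cast h1
        linarith
      have p2 : (0:ℝ) < (n.2 : ℝ) + a 1 := by
        have : (0:ℝ) ≤ (n.2 : ℝ) := by exact_mod_cast h2
        linarith
      have s1 : Real.sign (Bf A c₁ (vec n + a)) = Real.sign k := by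
        rw [e1, sign_mul_of_pos' _ _ p1]
      have s2 : Real.sign (Bf A c₂ (vec n + a)) = -Real.sign k := by
        rw [e2, sign_mul_of_pos' _ _ p2, Real.sign_neg, hkk']
      rw [s1, s2, if_pos ⟨h1, h2⟩, if_neg (by omega)]
      push_cast
      have : ((Real.sign k : ℂ) / 2) * ((Real.sign k + Real.sign k) * F n) =
          ((Real.sign k * Real.sign k : ℝ) : ℂ) * F n := by push_cast; ring
      rw [sub_neg_eq_add, this, hsq]
      push_cast; ring
    · have p1 : (0:ℝ) < (n.1 : ℝ) + a 0 := by
        have : (0:ℝ) ≤ (n.1 : ℝ) := by exact_mod_cast h1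
        linarith
      have p2 : ((n.2 : ℝ)) + a 1 < 0 := by
        have : (n.2 : ℝ) ≤ -1 := by exact_mod_cast (by omega : n.2 ≤ -1)
        linarith
      have s1 : Real.sign (Bf A c₁ (vec n + a)) = Real.sign k := by
        rw [e1, sign_mul_of_pos' _ _ p1]
      have s2 : Real.sign (Bf A c₂ (vec n + a)) = Real.sign k := by
        rw [e2, sign_mul_of_neg' _ _ p2, Real.sign_neg, hkk', neg_neg]
      rw [s1, s2, if_neg (by omega), if_neg (by omega)]
      simp
    · have p1 : ((n.1 : ℝ)) + a 0 < 0 := by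
        have : (n.1 : ℝ) ≤ -1 := by exact_mod_cast (by omega : n.1 ≤ -1)
        linarith
      have p2 : (0:ℝ) < (n.2 : ℝ) + a 1 := by
        have : (0:ℝ) ≤ (n.2 : ℝ) := by exact_mod_cast h2
        linarith
      have s1 : Real.sign (Bf A c₁ (vec n + a)) = -Real.sign k := by
        rw [e1, sign_mul_of_neg' _ _ p1]
      have s2 : Real.sign (Bf A c₂ (vec n + a)) = -Real.sign k := by
        rw [e2, sign_mul_of_pos' _ _ p2, Real.sign_neg, hkk']
      rw [s1, s2, if_neg (by omega), if_neg (by omega)]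
      simp
    · have p1 : ((n.1 : ℝ)) + a 0 < 0 := by
        have : (n.1 : ℝ) ≤ -1 := by exact_mod_cast (by omega : n.1 ≤ -1)
        linarith
      have p2 : ((n.2 : ℝ)) + a 1 < 0 := by
        have : (n.2 : ℝ) ≤ -1 := by exact_mod_cast (by omega : n.2 ≤ -1)
        linarith
      have s1 : Real.sign (Bf A c₁ (vec n + a)) = -Real.sign k := by
        rw [e1, sign_mul_of_neg' _ _ p1]
      have s2 : Real.sign (Bf A c₂ (vec n + a)) = Real.sign k := by
        rw [e2, sign_mul_of_neg' _ _ p2, Real.sign_neg, hkk', neg_neg]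
      rw [s1, s2, if_neg (by omega), if_pos ⟨h1, h2⟩]
      push_cast
      have : ((Real.sign k : ℂ) / 2) * ((-Real.sign k - Real.sign k) * F n) =
          -(((Real.sign k * Real.sign k : ℝ) : ℂ) * F n) := by push_cast; ring
      rw [this, hsq]
      push_cast; ring
  calc (∑' n : ℤ × ℤ, if 0 ≤ n.1 ∧ 0 ≤ n.2 then F n else 0) -
        (∑' n : ℤ × ℤ, if n.1 < 0 ∧ n.2 < 0 then F n else 0)
      = ∑' n : ℤ × ℤ, ((if 0 ≤ n.1 ∧ 0 ≤ n.2 then F n else 0) -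
          (if n.1 < 0 ∧ n.2 < 0 then F n else 0)) := (Summable.tsum_sub hs1 hs2).symm
    _ = ∑' n : ℤ × ℤ, ((Real.sign k / 2 : ℝ) : ℂ) *
          (((Real.sign (Bf A c₁ (vec n + a)) - Real.sign (Bf A c₂ (vec n + a)) : ℝ) : ℂ) * F n) :=
        tsum_congr key
    _ = _ := tsum_mul_left
end

section
/- Let ã₁, ã₂ ∈ ℚ with 0 < ã₁ < 1 and 0 < ã₂ − ã₁ + 1/2 < 1, let b̃₁, b̃₂ ∈ ℝ, let N be a positive integer and τ ∈ ℍ. Set z₁ = ã₁Nτ + b̃₁ and z₂ = ã₂Nτ + b̃₂, and assume z₂ ∉ ℤ + Nτℤ. Put a = (a₁, a₂) := (ã₁, ã₂ − ã₁ + 1/2), b = (b₁, b₂) := (b̃₁, b̃₂ − b̃₁ + 1/2), and let B and Q be the bilinear and quadratic forms attached to the matrix A = [[1,1],[1,0]], so Q(n+a) = (n₁+a₁)²/2 + (n₁+a₁)(n₂+a₂) and B(n,b) = (n₁+n₂)b₁ + n₁b₂. Then μ(z₁, z₂; Nτ) = ( e^{πi z₁} / θ(z₂; Nτ) ) · q^{−N(a₁²/2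 + a₁a₂)} · [ Σ_{n∈ℤ², n₁≥0, n₂≥0} e^{2πi B(n,b)} q^{N·Q(n+a)} − Σ_{n∈ℤ², n₁<0, n₂<0} e^{2πi B(n,b)} q^{N·Q(n+a)} ], where both series on the right converge absolutely. (This is the paper's Corollary expressing the Appell–Lerch sum μ through the cone vertex algebra trace function T^{(N)}_{a,b}(τ) = η(τ)^{−2}·[bracket] for the rank-2 lattice with Gram matrix N·[[1,1],[1,0]].) -/
open Complex Real

/-- The Jacobi theta function `θ(z;τ) = Σ_{n∈ℤ+1/2} e^{πin²τ + 2πin(z+1/2)}`. -/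
noncomputable def jtheta (z τ : ℂ) : ℂ :=
  ∑' n : ℤ, Complex.exp (Real.pi * Complex.I * ((n : ℂ) + 1 / 2) ^ 2 * τ +
    2 * Real.pi * Complex.I * ((n : ℂ) + 1 / 2) * (z + 1 / 2))

/-- The Appell–Lerch sum
`μ(z₁,z₂;τ) = (e^{πiz₁}/θ(z₂;τ)) Σ_{n∈ℤ} (-1)ⁿ e^{2πinz₂} q^{n(n+1)/2}/(1 - e^{2πiz₁}qⁿ)`. -/
noncomputable def lerchMu (z₁ z₂ τ : ℂ) : ℂ :=
  (Complex.exp (Real.pi * Complex.I * z₁) / jtheta z₂ τ) *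
    ∑' n : ℤ, ((-1 : ℂ) ^ n * Complex.exp (2 * Real.pi * Complex.I * (n : ℂ) * z₂) *
        Complex.exp (Real.pi * Complex.I * (n : ℂ) * ((n : ℂ) + 1) * τ)) /
      (1 - Complex.exp (2 * Real.pi * Complex.I * z₁) *
        Complex.exp (2 * Real.pi * Complex.I * (n : ℂ) * τ))

noncomputable def cexp2 (w : ℂ) : ℂ := Complex.exp (2 * Real.pi * Complex.I * w)

lemma cexp2_add (a b : ℂ) : cexp2 (a + b) = cexp2 a * cexp2 b := by
  rw [cexp2, cexp2, cexp2, ← Complex.exp_add]; ring_nf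

lemma cexp2_zpow (w : ℂ) (k : ℤ) : cexp2 ((k : ℂ) * w) = cexp2 w ^ k := by
  rw [cexp2, cexp2, ← Complex.exp_int_mul]; ring_nf

lemma norm_cexp2_affine (x y : ℝ) (τ : ℂ) :
    ‖cexp2 ((x : ℂ) + (y : ℂ) * τ)‖ = Real.exp (-(2 * Real.pi * (y * τ.im))) := by
  rw [cexp2, Complex.norm_exp]
  congr 1
  simp [Complex.mul_re, Complex.mul_im]

set_option maxHeartbeats 2000000 in
/-- The Appell–Lerch sum `μ(ã₁Nτ+b̃₁, ã₂Nτ+b̃₂; Nτ)` expressed through the cone vertex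
algebra trace function `T^{(N)}_{a,b}` for the rank-2 lattice with Gram matrix
`N·[[1,1],[1,0]]`, where `a = (ã₁, ã₂-ã₁+1/2)`, `b = (b̃₁, b̃₂-b̃₁+1/2)`,
`Q(n+a) = (n₁+a₁)²/2 + (n₁+a₁)(n₂+a₂)` and `B(n,b) = (n₁+n₂)b₁ + n₁b₂`. -/
theorem appell_lerch_eq_cone_trace
    (ta1 ta2 : ℚ) (h1 : 0 < ta1) (h2 : ta1 < 1)
    (h3 : 0 < ta2 - ta1 + 1 / 2) (h4 : ta2 - ta1 + 1 / 2 < 1)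
    (tb1 tb2 : ℝ) (N : ℕ) (hN : 0 < N) (τ : ℂ) (hτ : 0 < τ.im)
    (z₁ z₂ : ℂ)
    (hz₁ : z₁ = (ta1 : ℂ) * N * τ + tb1)
    (hz₂ : z₂ = (ta2 : ℂ) * N * τ + tb2)
    (hz₂' : ∀ c d : ℤ, z₂ ≠ (c : ℂ) + (d : ℂ) * ((N : ℂ) * τ))
    (a₁ a₂ : ℝ) (ha₁ : a₁ = (ta1 : ℝ)) (ha₂ : a₂ = ((ta2 : ℝ) - (ta1 : ℝ) + 1 / 2))
    (b₁ b₂ : ℝ) (hb₁ : b₁ = tb1) (hb₂ : b₂ = tb2 - tb1 + 1 / 2) :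
    Summable (fun n : ℤ × ℤ => if 0 ≤ n.1 ∧ 0 ≤ n.2 then
      ‖ph (((n.1 : ℝ) + (n.2 : ℝ)) * b₁ + (n.1 : ℝ) * b₂) *
        qp τ ((N : ℝ) * (((n.1 : ℝ) + a₁) ^ 2 / 2 + ((n.1 : ℝ) + a₁) * ((n.2 : ℝ) + a₂)))‖
      else 0) ∧
    Summable (fun n : ℤ × ℤ => if n.1 < 0 ∧ n.2 < 0 then
      ‖ph (((n.1 : ℝ) + (n.2 : ℝ)) * b₁ + (n.1 : ℝ) * b₂) *
        qp τ ((N : ℝ) * (((n.1 : ℝ) + a₁) ^ 2 / 2 + ((n.1 : ℝ) + a₁) * ((n.2 : ℝ) + a₂)))‖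
      else 0) ∧
    lerchMu z₁ z₂ ((N : ℂ) * τ) =
      (Complex.exp (Real.pi * Complex.I * z₁) / jtheta z₂ ((N : ℂ) * τ)) *
        qp τ (-((N : ℝ) * (a₁ ^ 2 / 2 + a₁ * a₂))) *
        ((∑' n : ℤ × ℤ, if 0 ≤ n.1 ∧ 0 ≤ n.2 then
            ph (((n.1 : ℝ) + (n.2 : ℝ)) * b₁ + (n.1 : ℝ) * b₂) *
              qp τ ((N : ℝ) * (((n.1 : ℝ) + a₁) ^ 2 / 2 + ((n.1 : ℝ) + a₁) * ((n.2 : ℝ) + a₂)))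
            else 0) -
         (∑' n : ℤ × ℤ, if n.1 < 0 ∧ n.2 < 0 then
            ph (((n.1 : ℝ) + (n.2 : ℝ)) * b₁ + (n.1 : ℝ) * b₂) *
              qp τ ((N : ℝ) * (((n.1 : ℝ) + a₁) ^ 2 / 2 + ((n.1 : ℝ) + a₁) * ((n.2 : ℝ) + a₂)))
            else 0)) := by
  subst ha₁ ha₂ hb₁ hb₂
  have hπ : (0:ℝ) < Real.pi := Real.pi_pos
  have hNR : (0:ℝ) < (N:ℝ) := by exact_mod_cast hN
  have hA1 : (0:ℝ) < (ta1:ℝ) := by exact_mod_cast h1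
  have hA2 : (ta1:ℝ) < 1 := by exact_mod_cast h2
  have hB1 : (0:ℝ) < (ta2:ℝ) - (ta1:ℝ) + 1/2 := by
    have : ((0:ℚ):ℝ) < ((ta2 - ta1 + 1/2 : ℚ) : ℝ) := by exact_mod_cast h3
    push_cast at this; linarith
  have hB2 : (ta2:ℝ) - (ta1:ℝ) + 1/2 < 1 := by
    have : ((ta2 - ta1 + 1/2 : ℚ) : ℝ) < ((1:ℚ):ℝ) := by exact_mod_cast h4
    push_cast at this; linarith
  set c0 : ℝ := 2 * Real.pi * ((N:ℝ) * τ.im) with hc0def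
  have hc0 : 0 < c0 := by
    rw [hc0def]; exact mul_pos (by positivity) (mul_pos hNR hτ)
  -- basic building blocks
  set D : ℤ → ℂ := fun n => cexp2 ((n:ℂ)/2 + (n:ℂ) * z₂ + (n:ℂ)*((n:ℂ)+1)/2 * ((N:ℂ)*τ))
    with hDdef
  set R : ℤ → ℂ := fun n => cexp2 (z₁ + (n:ℂ) * ((N:ℂ)*τ)) with hRdef
  set F : ℤ → ℤ → ℂ := fun n k => D n * R n ^ k with hFdef
  -- norms
  have hFc : ∀ n k : ℤ, F n k =
      cexp2 ((((n:ℝ)/2 + (n:ℝ)*tb2 + (k:ℝ)*b₁ : ℝ) : ℂ) +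
        ((((n:ℝ)*(ta2:ℝ) + (n:ℝ)*((n:ℝ)+1)/2 + (k:ℝ)*(ta1:ℝ) + (n:ℝ)*(k:ℝ)) * (N:ℝ) : ℝ) : ℂ) * τ) := by
    intro n k
    simp only [hFdef, hDdef, hRdef]
    rw [← cexp2_zpow, ← cexp2_add]
    congr 1
    rw [hz₁, hz₂]
    push_cast
    ring
  have hFnorm : ∀ n k : ℤ, ‖F n k‖ =
      Real.exp (-(c0 * ((n:ℝ)*(ta2:ℝ) + (n:ℝ)*((n:ℝ)+1)/2 + (k:ℝ)*(ta1:ℝ) + (n:ℝ)*(k:ℝ)))) := by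
    intro n k
    rw [hFc n k, norm_cexp2_affine]
    congr 1
    rw [hc0def]; ring
  have hRaff : ∀ n : ℤ, R n = cexp2 (((b₁ : ℝ) : ℂ) + (((((ta1:ℝ) + (n:ℝ)) * (N:ℝ)) : ℝ) : ℂ) * τ) := by
    intro n
    simp only [hRdef]
    congr 1
    rw [hz₁]
    push_cast
    ring
  have hRnorm : ∀ n : ℤ, ‖R n‖ = Real.exp (-(c0 * ((ta1:ℝ) + (n:ℝ)))) := by
    intro n
    rw [hRaff n, norm_cexp2_affine]
    congr 1
    rw [hc0def]; ring
  -- geometric parameters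
  set r : ℝ := Real.exp (-(c0 * (ta1:ℝ))) with hrdef
  have hr0 : 0 ≤ r := Real.exp_nonneg _
  have hr1 : r < 1 := by
    rw [hrdef]; exact Real.exp_lt_one_iff.2 (by nlinarith)
  set s : ℝ := Real.exp (-(c0 * (1 - (ta1:ℝ)))) with hsdef
  have hs0 : 0 ≤ s := Real.exp_nonneg _
  have hs1 : s < 1 := by
    rw [hsdef]; exact Real.exp_lt_one_iff.2 (by nlinarith)
  set K : ℝ := Real.exp (c0 * ((ta1:ℝ)^2/2 + (ta1:ℝ)*((ta2:ℝ)-(ta1:ℝ)+1/2))) with hKdef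
  -- summability of norms over the positive quadrant
  have hSpos : Summable (fun m : ℕ × ℕ => ‖F (m.1:ℤ) (m.2:ℤ)‖) := by
    refine Summable.of_nonneg_of_le (fun _ => norm_nonneg _) ?_
      ((summable_geometric_of_lt_one hr0 hr1).mul_of_nonneg
        (summable_geometric_of_lt_one hr0 hr1)
        (fun n => pow_nonneg hr0 n) (fun n => pow_nonneg hr0 n))
    intro m
    rw [hFnorm]
    have h5 : (0:ℝ) ≤ (m.1:ℝ) := Nat.cast_nonneg _
    have h6 : (0:ℝ) ≤ (m.2:ℝ) := Nat.cast_nonneg _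
    have key : (ta1:ℝ) * ((m.1:ℝ) + (m.2:ℝ)) ≤
        ((m.1:ℤ):ℝ)*(ta2:ℝ) + ((m.1:ℤ):ℝ)*(((m.1:ℤ):ℝ)+1)/2 + ((m.2:ℤ):ℝ)*(ta1:ℝ) + ((m.1:ℤ):ℝ)*((m.2:ℤ):ℝ) := by
      push_cast
      nlinarith [mul_nonneg h5 h6, sq_nonneg ((m.1:ℝ)), mul_nonneg h5 hB1.le]
    rw [hrdef, ← Real.exp_nat_mul, ← Real.exp_nat_mul, ← Real.exp_add]
    apply Real.exp_le_exp.2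
    have := mul_le_mul_of_nonneg_left key hc0.le
    push_cast at this ⊢
    linarith [this]
  -- summability of norms over the negative quadrant
  have hSneg : Summable (fun m : ℕ × ℕ => ‖F (-((m.1:ℤ)+1)) (-((m.2:ℤ)+1))‖) := by
    refine Summable.of_nonneg_of_le (fun _ => norm_nonneg _) ?_
      (((summable_geometric_of_lt_one hs0 hs1).mul_of_nonneg
        (summable_geometric_of_lt_one hs0 hs1)
        (fun n => pow_nonneg hs0 n) (fun n => pow_nonneg hs0 n)).mul_left K)
    intro m
    rw [hFnorm]
    have h5 : (0:ℝ) ≤ (m.1:ℝ) := Nat.cast_nonneg _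
    have h6 : (0:ℝ) ≤ (m.2:ℝ) := Nat.cast_nonneg _
    have key : (1 - (ta1:ℝ)) * ((m.1:ℝ) + (m.2:ℝ)) - ((ta1:ℝ)^2/2 + (ta1:ℝ)*((ta2:ℝ)-(ta1:ℝ)+1/2)) ≤
        ((-((m.1:ℤ)+1):ℤ):ℝ)*(ta2:ℝ) + ((-((m.1:ℤ)+1):ℤ):ℝ)*(((-((m.1:ℤ)+1):ℤ):ℝ)+1)/2 +
          ((-((m.2:ℤ)+1):ℤ):ℝ)*(ta1:ℝ) + ((-((m.1:ℤ)+1):ℤ):ℝ)*((-((m.2:ℤ)+1):ℤ):ℝ) := by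
      push_cast
      nlinarith [mul_nonneg h5 h6, sq_nonneg ((m.1:ℝ)), sq_nonneg (1 - (ta1:ℝ)),
        mul_nonneg h5 (by linarith : (0:ℝ) ≤ 1 - ((ta2:ℝ)-(ta1:ℝ)+1/2)),
        mul_nonneg (by linarith : (0:ℝ) ≤ 1 - (ta1:ℝ))
          (by linarith : (0:ℝ) ≤ 1 - ((ta2:ℝ)-(ta1:ℝ)+1/2))]
    rw [hKdef, hsdef, ← Real.exp_nat_mul, ← Real.exp_nat_mul, ← Real.exp_add, ← Real.exp_add]
    apply Real.exp_le_exp.2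
    have := mul_le_mul_of_nonneg_left key hc0.le
    push_cast at this ⊢
    linarith [this]
  have hSF : Summable (fun m : ℕ × ℕ => F (m.1:ℤ) (m.2:ℤ)) := hSpos.of_norm
  have hSFm : Summable (fun m : ℕ × ℕ => F (-((m.1:ℤ)+1)) (-((m.2:ℤ)+1))) := hSneg.of_norm
  -- geometric summation in each row, positive side
  have hgeo : ∀ n : ℕ, HasSum (fun k : ℕ => F (n:ℤ) (k:ℤ)) (D (n:ℤ) * (1 - R (n:ℤ))⁻¹) := by
    intro n
    have hlt : ‖R (n:ℤ)‖ < 1 := by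
      rw [hRnorm]
      refine Real.exp_lt_one_iff.2 ?_
      have h5 : (0:ℝ) ≤ ((n:ℤ):ℝ) := by push_cast; exact Nat.cast_nonneg _
      nlinarith
    have H := (hasSum_geometric_of_norm_lt_one hlt).mul_left (D (n:ℤ))
    have heq : (fun k : ℕ => F (n:ℤ) (k:ℤ)) = fun k : ℕ => D (n:ℤ) * R (n:ℤ) ^ k := by
      funext k
      simp only [hFdef, zpow_natCast]
    rw [heq]
    exact H
  -- geometric summation in each row, negative side
  have hgeoneg : ∀ m : ℕ, HasSum (fun j : ℕ => F (-((m:ℤ)+1)) (-((j:ℤ)+1)))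
      (-(D (-((m:ℤ)+1)) * (1 - R (-((m:ℤ)+1)))⁻¹)) := by
    intro m
    have h5 : (0:ℝ) ≤ (m:ℝ) := Nat.cast_nonneg _
    set n : ℤ := -((m:ℤ)+1) with hn
    have hnR : ((n:ℤ):ℝ) = -((m:ℝ)+1) := by rw [hn]; push_cast; ring
    have hgt : 1 < ‖R n‖ := by
      rw [hRnorm, hnR]
      refine Real.one_lt_exp_iff.2 ?_
      nlinarith
    have hinv : ‖(R n)⁻¹‖ < 1 := by
      rw [norm_inv]
      rw [hRnorm, hnR] at hgt ⊢
      rw [← Real.exp_neg]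
      refine Real.exp_lt_one_iff.2 ?_
      nlinarith
    have hR0 : R n ≠ 0 := by simp only [hRdef]; exact Complex.exp_ne_zero _
    have h1R : (1:ℂ) - R n ≠ 0 := by
      intro h
      have hRe : R n = 1 := by linear_combination -h
      rw [hRe] at hgt; simp at hgt
    have h1Ri : (1:ℂ) - (R n)⁻¹ ≠ 0 := by
      intro h
      have hRe : (R n)⁻¹ = 1 := by linear_combination -h
      rw [hRe] at hinv; simp at hinv
    have H := (hasSum_geometric_of_norm_lt_one hinv).mul_left (D n * (R n)⁻¹)
    have heq : (fun j : ℕ => D n * (R n)⁻¹ * ((R n)⁻¹) ^ j) = fun j : ℕ => F n (-((j:ℤ)+1)) := by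
      funext j
      simp only [hFdef]
      have : R n ^ (-((j:ℤ)+1)) = ((R n)⁻¹) ^ (j+1) := by
        rw [zpow_neg, ← inv_zpow, show ((j:ℤ)+1) = ((j+1 : ℕ):ℤ) by push_cast; ring, zpow_natCast]
      rw [this, pow_succ]
      ring
    rw [heq] at H
    have hval : D n * (R n)⁻¹ * (1 - (R n)⁻¹)⁻¹ = -(D n * (1 - R n)⁻¹) := by
      have hh1 : (1 : ℂ) - (R n)⁻¹ = -(1 - R n) * (R n)⁻¹ := by
        field_simp
        ring
      have hh2 : D n * (R n)⁻¹ * (-((1 - R n)⁻¹) * R n) = -(D n * (1 - R n)⁻¹) * ((R n)⁻¹ * R n) := by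
        ring
      rw [hh1, mul_inv, inv_neg, inv_inv, hh2, inv_mul_cancel₀ hR0, mul_one]
    rw [hval] at H
    exact H
  -- identification of the Lerch summand
  have hsummand : ∀ n : ℤ,
      ((-1 : ℂ) ^ n * Complex.exp (2 * Real.pi * Complex.I * (n : ℂ) * z₂) *
          Complex.exp (Real.pi * Complex.I * (n : ℂ) * ((n : ℂ) + 1) * ((N:ℂ)*τ))) /
        (1 - Complex.exp (2 * Real.pi * Complex.I * z₁) *
          Complex.exp (2 * Real.pi * Complex.I * (n : ℂ) * ((N:ℂ)*τ)))
      = D n * (1 - R n)⁻¹ := by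
    intro n
    have hnum : (-1 : ℂ) ^ n * Complex.exp (2 * Real.pi * Complex.I * (n : ℂ) * z₂) *
        Complex.exp (Real.pi * Complex.I * (n : ℂ) * ((n : ℂ) + 1) * ((N:ℂ)*τ)) = D n := by
      rw [show ((-1:ℂ)) ^ n = Complex.exp ((n:ℂ) * (Real.pi * Complex.I)) by
        rw [Complex.exp_int_mul, Complex.exp_pi_mul_I]]
      rw [← Complex.exp_add, ← Complex.exp_add]
      simp only [hDdef, cexp2]
      congr 1
      ring
    have hden : Complex.exp (2 * Real.pi * Complex.I * z₁) *
        Complex.exp (2 * Real.pi * Complex.I * (n : ℂ) * ((N:ℂ)*τ)) = R n := by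
      rw [← Complex.exp_add]
      simp only [hRdef, cexp2]
      congr 1
      ring
    rw [hnum, hden, div_eq_mul_inv]
  -- assemble the ℤ-sum
  set SF : ℂ := ∑' m : ℕ × ℕ, F (m.1:ℤ) (m.2:ℤ) with hSFdef
  set SG : ℂ := ∑' m : ℕ × ℕ, F (-((m.1:ℤ)+1)) (-((m.2:ℤ)+1)) with hSGdef
  have hA : HasSum (fun n : ℕ => D (n:ℤ) * (1 - R (n:ℤ))⁻¹) SF :=
    HasSum.prod_fiberwise hSF.hasSum hgeo
  have hBneg : HasSum (fun m : ℕ => -(D (-((m:ℤ)+1)) * (1 - R (-((m:ℤ)+1)))⁻¹)) SG :=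
    HasSum.prod_fiberwise hSFm.hasSum hgeoneg
  have hB : HasSum (fun m : ℕ => D (-((m:ℤ)+1)) * (1 - R (-((m:ℤ)+1)))⁻¹) (-SG) := by
    simpa using hBneg.neg
  have hZ : HasSum (fun n : ℤ =>
      ((-1 : ℂ) ^ n * Complex.exp (2 * Real.pi * Complex.I * (n : ℂ) * z₂) *
          Complex.exp (Real.pi * Complex.I * (n : ℂ) * ((n : ℂ) + 1) * ((N:ℂ)*τ))) /
        (1 - Complex.exp (2 * Real.pi * Complex.I * z₁) *
          Complex.exp (2 * Real.pi * Complex.I * (n : ℂ) * ((N:ℂ)*τ)))) (SF + -SG) := by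
    refine HasSum.of_nat_of_neg_add_one ?_ ?_
    · simpa only [hsummand] using hA
    · simpa only [hsummand] using hB
  -- the quadrant injections
  set ip : ℕ × ℕ → ℤ × ℤ := fun m => ((m.1:ℤ), (m.2:ℤ)) with hipdef
  set im : ℕ × ℕ → ℤ × ℤ := fun m => (-((m.1:ℤ)+1), -((m.2:ℤ)+1)) with himdef
  have hipinj : Function.Injective ip := by
    intro a b h
    simp only [hipdef, Prod.ext_iff] at h ⊢
    exact ⟨Nat.cast_injective h.1, Nat.cast_injective h.2⟩
  have himinj : Function.Injective im := by
    intro a b h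
    simp only [himdef, Prod.ext_iff] at h
    have : (a.1:ℤ) = b.1 ∧ (a.2:ℤ) = b.2 := by omega
    exact Prod.ext (by exact_mod_cast this.1) (by exact_mod_cast this.2)
  have hipmem : ∀ p : ℤ × ℤ, p ∈ Set.range ip ↔ (0 ≤ p.1 ∧ 0 ≤ p.2) := by
    intro p
    constructor
    · rintro ⟨m, rfl⟩
      exact ⟨Int.natCast_nonneg _, Int.natCast_nonneg _⟩
    · intro h
      exact ⟨(p.1.toNat, p.2.toNat), Prod.ext (by simp [hipdef, Int.toNat_of_nonneg h.1])
        (by simp [hipdef, Int.toNat_of_nonneg h.2])⟩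
  have himmem : ∀ p : ℤ × ℤ, p ∈ Set.range im ↔ (p.1 < 0 ∧ p.2 < 0) := by
    intro p
    constructor
    · rintro ⟨m, rfl⟩
      constructor <;> simp only [himdef] <;> omega
    · intro h
      refine ⟨((-p.1-1).toNat, (-p.2-1).toNat), Prod.ext ?_ ?_⟩ <;> simp only [himdef] <;> omega
  -- the key algebraic identity between lattice terms and F
  have hGF : ∀ n₁ n₂ : ℤ,
      ph (((n₁ : ℝ) + (n₂ : ℝ)) * b₁ + (n₁ : ℝ) * (tb2 - b₁ + 1/2)) *
        qp τ ((N : ℝ) * (((n₁ : ℝ) + (ta1:ℝ)) ^ 2 / 2 +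
          ((n₁ : ℝ) + (ta1:ℝ)) * ((n₂ : ℝ) + ((ta2:ℝ) - (ta1:ℝ) + 1/2))))
      = qp τ ((N : ℝ) * ((ta1:ℝ) ^ 2 / 2 + (ta1:ℝ) * ((ta2:ℝ) - (ta1:ℝ) + 1/2))) *
          F n₁ n₂ := by
    intro n₁ n₂
    simp only [hFdef, hDdef, hRdef, ph, qp, cexp2]
    rw [← Complex.exp_int_mul, ← Complex.exp_add, ← Complex.exp_add, ← Complex.exp_add]
    congr 1
    rw [hz₁, hz₂]
    push_cast
    ring
  set qpc : ℂ := qp τ ((N : ℝ) * ((ta1:ℝ) ^ 2 / 2 + (ta1:ℝ) * ((ta2:ℝ) - (ta1:ℝ) + 1/2)))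
    with hqpcdef
  -- summability statements of the theorem
  have hsum1 : Summable (fun p : ℤ × ℤ => if 0 ≤ p.1 ∧ 0 ≤ p.2 then
      ‖ph (((p.1 : ℝ) + (p.2 : ℝ)) * b₁ + (p.1 : ℝ) * (tb2 - b₁ + 1/2)) *
        qp τ ((N : ℝ) * (((p.1 : ℝ) + (ta1:ℝ)) ^ 2 / 2 +
          ((p.1 : ℝ) + (ta1:ℝ)) * ((p.2 : ℝ) + ((ta2:ℝ) - (ta1:ℝ) + 1/2))))‖
      else 0) := by
    refine (Function.Injective.summable_iff hipinj ?_).1 ?_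
    · intro p hp
      exact if_neg fun hc => hp ((hipmem p).2 hc)
    · refine Summable.congr (hSpos.mul_left ‖qpc‖) fun m => ?_
      simp only [Function.comp_apply, hipdef]
      rw [if_pos ⟨Int.natCast_nonneg _, Int.natCast_nonneg _⟩, hGF]
      exact (norm_mul _ _).symm
  have hsum2 : Summable (fun p : ℤ × ℤ => if p.1 < 0 ∧ p.2 < 0 then
      ‖ph (((p.1 : ℝ) + (p.2 : ℝ)) * b₁ + (p.1 : ℝ) * (tb2 - b₁ + 1/2)) *
        qp τ ((N : ℝ) * (((p.1 : ℝ) + (ta1:ℝ)) ^ 2 / 2 +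
          ((p.1 : ℝ) + (ta1:ℝ)) * ((p.2 : ℝ) + ((ta2:ℝ) - (ta1:ℝ) + 1/2))))‖
      else 0) := by
    refine (Function.Injective.summable_iff himinj ?_).1 ?_
    · intro p hp
      exact if_neg fun hc => hp ((himmem p).2 hc)
    · refine Summable.congr (hSneg.mul_left ‖qpc‖) fun m => ?_
      simp only [Function.comp_apply, himdef]
      rw [if_pos ⟨by omega, by omega⟩, hGF]
      exact (norm_mul _ _).symm
  refine ⟨hsum1, hsum2, ?_⟩
  -- the two lattice sums
  have hS1 : (∑' p : ℤ × ℤ, if 0 ≤ p.1 ∧ 0 ≤ p.2 then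
      ph (((p.1 : ℝ) + (p.2 : ℝ)) * b₁ + (p.1 : ℝ) * (tb2 - b₁ + 1/2)) *
        qp τ ((N : ℝ) * (((p.1 : ℝ) + (ta1:ℝ)) ^ 2 / 2 +
          ((p.1 : ℝ) + (ta1:ℝ)) * ((p.2 : ℝ) + ((ta2:ℝ) - (ta1:ℝ) + 1/2))))
      else 0) = qpc * SF := by
    rw [← Function.Injective.tsum_eq hipinj
      (f := fun p : ℤ × ℤ => if 0 ≤ p.1 ∧ 0 ≤ p.2 then
        ph (((p.1 : ℝ) + (p.2 : ℝ)) * b₁ + (p.1 : ℝ) * (tb2 - b₁ + 1/2)) *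
          qp τ ((N : ℝ) * (((p.1 : ℝ) + (ta1:ℝ)) ^ 2 / 2 +
            ((p.1 : ℝ) + (ta1:ℝ)) * ((p.2 : ℝ) + ((ta2:ℝ) - (ta1:ℝ) + 1/2))))
        else 0)
      (Function.support_subset_iff'.2 fun p hp => if_neg fun hc => hp ((hipmem p).2 hc))]
    rw [hSFdef, ← tsum_mul_left]
    refine tsum_congr fun m => ?_
    simp only [hipdef]
    rw [if_pos ⟨Int.natCast_nonneg _, Int.natCast_nonneg _⟩, hGF]
  have hS2 : (∑' p : ℤ × ℤ, if p.1 < 0 ∧ p.2 < 0 then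
      ph (((p.1 : ℝ) + (p.2 : ℝ)) * b₁ + (p.1 : ℝ) * (tb2 - b₁ + 1/2)) *
        qp τ ((N : ℝ) * (((p.1 : ℝ) + (ta1:ℝ)) ^ 2 / 2 +
          ((p.1 : ℝ) + (ta1:ℝ)) * ((p.2 : ℝ) + ((ta2:ℝ) - (ta1:ℝ) + 1/2))))
      else 0) = qpc * SG := by
    rw [← Function.Injective.tsum_eq himinj
      (f := fun p : ℤ × ℤ => if p.1 < 0 ∧ p.2 < 0 then
        ph (((p.1 : ℝ) + (p.2 : ℝ)) * b₁ + (p.1 : ℝ) * (tb2 - b₁ + 1/2)) *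
          qp τ ((N : ℝ) * (((p.1 : ℝ) + (ta1:ℝ)) ^ 2 / 2 +
            ((p.1 : ℝ) + (ta1:ℝ)) * ((p.2 : ℝ) + ((ta2:ℝ) - (ta1:ℝ) + 1/2))))
        else 0)
      (Function.support_subset_iff'.2 fun p hp => if_neg fun hc => hp ((himmem p).2 hc))]
    rw [hSGdef, ← tsum_mul_left]
    refine tsum_congr fun m => ?_
    simp only [himdef]
    rw [if_pos ⟨by omega, by omega⟩, hGF]
  -- final identity
  rw [lerchMu, hZ.tsum_eq, hS1, hS2]
  have hqp : qp τ (-((N : ℝ) * ((ta1:ℝ) ^ 2 / 2 + (ta1:ℝ) * ((ta2:ℝ) - (ta1:ℝ) + 1/2)))) * qpc = 1 := by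
    rw [hqpcdef, qp, qp, ← Complex.exp_add]
    rw [show (2 * (Real.pi:ℂ) * Complex.I *
        ((-((N : ℝ) * ((ta1:ℝ) ^ 2 / 2 + (ta1:ℝ) * ((ta2:ℝ) - (ta1:ℝ) + 1/2))) : ℝ) : ℂ) * τ +
        2 * (Real.pi:ℂ) * Complex.I *
        (((N : ℝ) * ((ta1:ℝ) ^ 2 / 2 + (ta1:ℝ) * ((ta2:ℝ) - (ta1:ℝ) + 1/2)) : ℝ) : ℂ) * τ) = 0 by
      push_cast; ring]
    exact Complex.exp_zero
  linear_combination ((Complex.exp (Real.pi * Complex.I * z₁) / jtheta z₂ ((N:ℂ) * τ)) * (SG - SF)) * hqp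
end

section
/- Let m be a positive integer, τ ∈ ℍ, and z ∈ ℂ with 0 < |Im z| < Im τ; set α := Im(z)/Im(τ) and y := e^{2πiz}. Then Σ_{k∈ℤ} y^{2km} q^{mk²} (y q^k + 1)/(y q^k − 1) = − Σ_{(k,l)∈ℤ²} ( sgn(k+α) + sgn(l) ) y^{2mk+l} q^{mk² + kl}, and both series converge absolutely. (This is the identity μ_{m,0}(z,τ) = −Θ⁺_{A,c₁,c₂}(z,0;τ) of the paper, for the quadratic form with matrix A = [[2m,1],[1,0]] and the null vectors c₁ = (0,1), c₂ = (−1,2m).) -/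
open Complex Real

lemma norm_qp (τ : ℂ) (c : ℝ) : ‖qp τ c‖ = Real.exp (-(2 * Real.pi * c * τ.im)) := by
  rw [qp, Complex.norm_exp]
  congr 1
  simp [Complex.mul_re, Complex.mul_im]

lemma qp_add (τ : ℂ) (c d : ℝ) : qp τ (c + d) = qp τ c * qp τ d := by
  rw [qp, qp, qp, ← Complex.exp_add]
  congr 1
  push_cast
  ring

lemma qp_zpow (τ : ℂ) (c : ℝ) (l : ℤ) : (qp τ c) ^ l = qp τ (l * c) := by
  rw [qp, qp, ← Complex.exp_int_mul]
  congr 1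
  push_cast
  ring

lemma real_exp_zpow (x : ℝ) (n : ℤ) : (Real.exp x) ^ (n : ℤ) = Real.exp (n * x) := by
  obtain ⟨k, rfl | rfl⟩ := n.eq_nat_or_neg
  · rw [zpow_natCast, ← Real.exp_nat_mul]
    push_cast; ring_nf
  · rw [zpow_neg, zpow_natCast, ← Real.exp_nat_mul, ← Real.exp_neg]
    push_cast; ring_nf

lemma abs_sign_le_one (x : ℝ) : |Real.sign x| ≤ 1 := by
  rcases Real.sign_apply_eq x with h | h | h <;> simp [h]

lemma summable_exp_neg_abs {c : ℝ} (hc : 0 < c) :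
    Summable fun l : ℤ => Real.exp (-c * |(l : ℝ)|) := by
  have key : Summable fun n : ℕ => Real.exp (-c * (n : ℝ)) := by
    have : ∀ n : ℕ, Real.exp (-c * (n : ℝ)) = (Real.exp (-c)) ^ n := by
      intro n; rw [← Real.exp_nat_mul]; ring_nf
    simp_rw [this]
    exact summable_geometric_of_lt_one (Real.exp_nonneg _) (Real.exp_lt_one_iff.mpr (by linarith))
  apply Summable.of_nat_of_neg
  · simpa using key
  · simpa using key

set_option maxHeartbeats 1000000 in
lemma hasSum_ratio_lt (w : ℂ) (hw : ‖w‖ < 1) :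
    HasSum (fun l : ℤ => -(((Real.sign (l : ℝ) + 1 : ℝ)) : ℂ) * w ^ l) ((w + 1) / (w - 1)) := by
  have hw1 : w ≠ 1 := by rintro rfl; simp at hw
  have h1w : (1 : ℂ) - w ≠ 0 := sub_ne_zero.mpr (Ne.symm hw1)
  have h2w : w - 1 ≠ 0 := sub_ne_zero.mpr hw1
  have h1 : HasSum (fun n : ℕ => (-2 : ℂ) * w ^ n) (-2 * (1 - w)⁻¹) :=
    (hasSum_geometric_of_norm_lt_one hw).mul_left _
  have h2 : HasSum (Function.update (fun n : ℕ => (-2 : ℂ) * w ^ n) 0 (-1))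
      ((-1) - (-2 : ℂ) * w ^ 0 + (-2 * (1 - w)⁻¹)) := h1.update 0 (-1)
  have hnn : HasSum (fun n : ℕ => -(((Real.sign ((n : ℤ) : ℝ) + 1 : ℝ)) : ℂ) * w ^ ((n : ℤ)))
      ((-1) - (-2 : ℂ) * w ^ 0 + (-2 * (1 - w)⁻¹)) := by
    convert h2 using 2 with n
    rcases Nat.eq_zero_or_pos n with rfl | hn
    · simp [Real.sign_zero]
    · rw [Function.update_of_ne (by exact_mod_cast hn.ne')]
      have : Real.sign ((n : ℤ) : ℝ) = 1 := Real.sign_of_pos (by exact_mod_cast hn)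
      rw [this, zpow_natCast]
      push_cast
      ring
  have hneg : HasSum (fun n : ℕ =>
      -(((Real.sign ((-(n + 1) : ℤ) : ℝ) + 1 : ℝ)) : ℂ) * w ^ ((-(n + 1) : ℤ))) 0 := by
    have : (fun n : ℕ =>
        -(((Real.sign ((-(n + 1) : ℤ) : ℝ) + 1 : ℝ)) : ℂ) * w ^ ((-(n + 1) : ℤ))) = fun _ => 0 := by
      funext n
      have : Real.sign ((-(n + 1) : ℤ) : ℝ) = -1 := Real.sign_of_neg (by push_cast; linarith)
      rw [this]; push_cast; ring
    rw [this]
    exact hasSum_zero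
  have hval : ((-1 : ℂ) - (-2 : ℂ) * w ^ 0 + (-2 * (1 - w)⁻¹) + 0 : ℂ) = (w + 1) / (w - 1) := by
    rw [pow_zero]
    field_simp
    ring
  have hfin := HasSum.of_nat_of_neg_add_one
    (f := fun l : ℤ => -(((Real.sign (l : ℝ) + 1 : ℝ)) : ℂ) * w ^ l) hnn hneg
  rwa [hval] at hfin

lemma hasSum_ratio_gt (w : ℂ) (hw : 1 < ‖w‖) :
    HasSum (fun l : ℤ => -(((Real.sign (l : ℝ) - 1 : ℝ)) : ℂ) * w ^ l) ((w + 1) / (w - 1)) := by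
  have hw0 : w ≠ 0 := by intro h; rw [h, norm_zero] at hw; linarith
  have hw1 : w ≠ 1 := by rintro rfl; rw [norm_one] at hw; linarith
  have h2w : w - 1 ≠ 0 := sub_ne_zero.mpr hw1
  have hwinv : ‖w⁻¹‖ < 1 := by
    rw [norm_inv, inv_lt_one_iff₀]
    right; exact hw
  have h4w : w⁻¹ - 1 ≠ 0 := by
    rw [sub_ne_zero]
    intro hh
    rw [hh, norm_one] at hwinv
    exact lt_irrefl _ hwinv
  have h := hasSum_ratio_lt w⁻¹ hwinv
  have h2 := ((Equiv.neg ℤ).hasSum_iff).mpr h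
  have heq : ((fun l : ℤ => -(((Real.sign (l : ℝ) + 1 : ℝ)) : ℂ) * (w⁻¹) ^ l) ∘ (Equiv.neg ℤ))
      = fun l : ℤ => (((Real.sign (l : ℝ) - 1 : ℝ)) : ℂ) * w ^ l := by
    funext l
    simp only [Function.comp_apply, Equiv.neg_apply]
    have hs : Real.sign ((-l : ℤ) : ℝ) = -Real.sign ((l : ℤ) : ℝ) := by
      push_cast; exact Real.sign_neg
    rw [hs, zpow_neg, inv_zpow, inv_inv]
    push_cast
    ring
  rw [heq] at h2
  have h3 := h2.neg
  have h5 : (1 : ℂ) - w ≠ 0 := sub_ne_zero.mpr (Ne.symm hw1)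
  have hval : -((w⁻¹ + 1) / (w⁻¹ - 1)) = (w + 1) / (w - 1) := by
    field_simp [h5]
    ring
  rw [hval] at h3
  convert h3 using 1
  · rfl
  funext l
  push_cast
  ring


set_option maxHeartbeats 2000000 in
/-- For `0 < |Im z| < Im τ`, the specialized Appell–Lerch sum `μ_{m,0}(z,τ)` equals minus
the holomorphic indefinite theta function `Θ⁺_{A,c₁,c₂}(z,0;τ)` for `A = [[2m,1],[1,0]]`,
`c₁ = (0,1)`, `c₂ = (-1,2m)`:
`Σ_{k∈ℤ} y^{2km} q^{mk²} (yq^k+1)/(yq^k-1)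
  = - Σ_{(k,l)∈ℤ²} (sgn(k+α)+sgn(l)) y^{2mk+l} q^{mk²+kl}` with `α = Im z / Im τ`. -/
theorem specialized_appell_lerch_eq_neg_indefinite_theta
    (m : ℕ) (hm : 0 < m) (τ z : ℂ) (hτ : 0 < τ.im)
    (hz0 : 0 < |z.im|) (hz1 : |z.im| < τ.im)
    (y : ℂ) (hy : y = Complex.exp (2 * Real.pi * Complex.I * z)) :
    Summable (fun k : ℤ =>
      ‖y ^ (2 * k * (m : ℤ)) * qp τ ((m : ℝ) * (k : ℝ) ^ 2) *
        ((y * qp τ (k : ℝ) + 1) / (y * qp τ (k : ℝ) - 1))‖) ∧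
    Summable (fun n : ℤ × ℤ =>
      ‖((Real.sign ((n.1 : ℝ) + z.im / τ.im) + Real.sign (n.2 : ℝ) : ℝ) : ℂ) *
        (y ^ (2 * (m : ℤ) * n.1 + n.2) *
          qp τ ((m : ℝ) * (n.1 : ℝ) ^ 2 + (n.1 : ℝ) * (n.2 : ℝ)))‖) ∧
    (∑' k : ℤ, y ^ (2 * k * (m : ℤ)) * qp τ ((m : ℝ) * (k : ℝ) ^ 2) *
        ((y * qp τ (k : ℝ) + 1) / (y * qp τ (k : ℝ) - 1))) =
      -∑' n : ℤ × ℤ,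
        ((Real.sign ((n.1 : ℝ) + z.im / τ.im) + Real.sign (n.2 : ℝ) : ℝ) : ℂ) *
          (y ^ (2 * (m : ℤ) * n.1 + n.2) *
            qp τ ((m : ℝ) * (n.1 : ℝ) ^ 2 + (n.1 : ℝ) * (n.2 : ℝ))) := by
  have hy0 : y ≠ 0 := by rw [hy]; exact Complex.exp_ne_zero _
  set t := τ.im with htdef
  set a := z.im with hadef
  set α := a / t with hαdef
  have ht : 0 < t := hτ
  have hπ : 0 < Real.pi := Real.pi_pos
  have hny : ‖y‖ = Real.exp (-(2 * Real.pi * a)) := by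
    rw [hy, Complex.norm_exp]
    congr 1
    simp [Complex.mul_re, Complex.mul_im, hadef]
  -- norm of general term
  have hnorm : ∀ (n : ℤ) (c : ℝ), ‖y ^ (n : ℤ) * qp τ c‖
      = Real.exp (-(2 * Real.pi * ((n : ℝ) * a + c * t))) := by
    intro n c
    rw [norm_mul, norm_zpow, hny, norm_qp, real_exp_zpow, ← Real.exp_add]
    congr 1
    ring
  -- basic facts about α
  have haa : a = α * t := by rw [hαdef]; field_simp
  have hα0 : 0 < |α| := by
    rw [hαdef, abs_div, abs_of_pos ht]
    positivity
  have hα1 : |α| < 1 := by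
    rw [hαdef, abs_div, abs_of_pos ht, div_lt_one ht]
    exact hz1
  have habs : ∀ k : ℤ, min |α| (1 - |α|) ≤ |(k : ℝ) + α| := by
    intro k
    rcases lt_trichotomy k 0 with hk | hk | hk
    · have hk1 : (k : ℝ) ≤ -1 := by exact_mod_cast (by omega : k ≤ -1)
      calc min |α| (1 - |α|) ≤ 1 - |α| := min_le_right _ _
        _ ≤ -((k : ℝ) + α) := by linarith [le_abs_self α]
        _ ≤ |(k : ℝ) + α| := neg_le_abs _
    · subst hk
      simpa using min_le_left |α| (1 - |α|)
    · have hk1 : (1 : ℝ) ≤ (k : ℝ) := by exact_mod_cast (by omega : 1 ≤ k)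
      calc min |α| (1 - |α|) ≤ 1 - |α| := min_le_right _ _
        _ ≤ (k : ℝ) + α := by linarith [neg_abs_le α]
        _ ≤ |(k : ℝ) + α| := le_abs_self _
  have hδpos : 0 < min |α| (1 - |α|) := lt_min hα0 (by linarith)
  have hne : ∀ k : ℤ, ((k : ℝ) + α) ≠ 0 := by
    intro k h
    have := habs k
    rw [h, abs_zero] at this
    linarith
  -- norm of w
  have hwnorm : ∀ k : ℤ, ‖y * qp τ (k : ℝ)‖ = Real.exp (-(2 * Real.pi * (a + k * t))) := by
    intro k
    rw [norm_mul, hny, norm_qp, ← Real.exp_add]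
    congr 1; ring
  -- product identity
  have hprod : ∀ k l : ℤ,
      y ^ (2 * (m : ℤ) * k + l) * qp τ ((m : ℝ) * (k : ℝ) ^ 2 + (k : ℝ) * (l : ℝ))
      = (y ^ (2 * k * (m : ℤ)) * qp τ ((m : ℝ) * (k : ℝ) ^ 2)) * (y * qp τ (k : ℝ)) ^ l := by
    intro k l
    rw [show ((m : ℝ) * (k : ℝ) ^ 2 + (k : ℝ) * (l : ℝ))
          = (m : ℝ) * (k : ℝ) ^ 2 + (l : ℝ) * (k : ℝ) by ring,
      qp_add, show (2 * (m : ℤ) * k + l) = 2 * k * (m : ℤ) + l by ring,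
      zpow_add₀ hy0, mul_zpow, qp_zpow]
    ring
  -- relation between sign of a + k t and k + α
  have hmul : ∀ k : ℤ, ((k : ℝ) + α) * t = a + k * t := by
    intro k; rw [haa]; ring
  have hsgn_pos : ∀ k : ℤ, 0 < a + k * t → 0 < (k : ℝ) + α := by
    intro k h
    rcases lt_or_ge 0 ((k : ℝ) + α) with h' | h'
    · exact h'
    · exfalso; nlinarith [hmul k]
  have hsgn_neg : ∀ k : ℤ, a + k * t < 0 → (k : ℝ) + α < 0 := by
    intro k h
    rcases lt_or_ge ((k : ℝ) + α) 0 with h' | h'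
    · exact h'
    · exfalso; nlinarith [hmul k]
  -- the key per-k expansion
  have key : ∀ k : ℤ,
      HasSum (fun l : ℤ => ((Real.sign ((k : ℝ) + α) + Real.sign ((l : ℤ) : ℝ) : ℝ) : ℂ) *
          (y ^ (2 * (m : ℤ) * k + l) * qp τ ((m : ℝ) * (k : ℝ) ^ 2 + (k : ℝ) * (l : ℝ))))
        (-(y ^ (2 * k * (m : ℤ)) * qp τ ((m : ℝ) * (k : ℝ) ^ 2) *
          ((y * qp τ (k : ℝ) + 1) / (y * qp τ (k : ℝ) - 1)))) := by
    intro k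
    have hkne : a + k * t ≠ 0 := by
      intro h
      apply hne k
      have := hmul k
      rw [h] at this
      exact (mul_eq_zero.mp this).resolve_right ht.ne'
    rcases lt_or_gt_of_ne hkne with hng | hps
    · have hs : Real.sign ((k : ℝ) + α) = -1 := Real.sign_of_neg (hsgn_neg k hng)
      have hwgt : 1 < ‖y * qp τ (k : ℝ)‖ := by
        rw [hwnorm k, Real.one_lt_exp_iff]
        nlinarith
      have h2 := ((hasSum_ratio_gt _ hwgt).mul_left
        (y ^ (2 * k * (m : ℤ)) * qp τ ((m : ℝ) * (k : ℝ) ^ 2))).neg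
      convert h2 using 1
      · rfl
      funext l
      rw [hs, hprod k l]
      push_cast
      ring
    · have hs : Real.sign ((k : ℝ) + α) = 1 := Real.sign_of_pos (hsgn_pos k hps)
      have hwlt : ‖y * qp τ (k : ℝ)‖ < 1 := by
        rw [hwnorm k, Real.exp_lt_one_iff]
        nlinarith
      have h2 := ((hasSum_ratio_lt _ hwlt).mul_left
        (y ^ (2 * k * (m : ℤ)) * qp τ ((m : ℝ) * (k : ℝ) ^ 2))).neg
      convert h2 using 1
      · rfl
      funext l
      rw [hs, hprod k l]
      push_cast
      ring
  -- norm of the double-sum terms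
  have hFnorm : ∀ n : ℤ × ℤ,
      ‖((Real.sign ((n.1 : ℝ) + α) + Real.sign ((n.2 : ℤ) : ℝ) : ℝ) : ℂ) *
        (y ^ (2 * (m : ℤ) * n.1 + n.2) *
          qp τ ((m : ℝ) * (n.1 : ℝ) ^ 2 + (n.1 : ℝ) * (n.2 : ℝ)))‖
      = |Real.sign ((n.1 : ℝ) + α) + Real.sign ((n.2 : ℤ) : ℝ)| *
        Real.exp (-(2 * Real.pi * (((2 * (m : ℤ) * n.1 + n.2 : ℤ) : ℝ) * a
          + ((m : ℝ) * (n.1 : ℝ) ^ 2 + (n.1 : ℝ) * (n.2 : ℝ)) * t))) := by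
    intro n
    rw [norm_mul, hnorm, Complex.norm_real, Real.norm_eq_abs]
  set δ := min |α| (1 - |α|) with hδdef
  -- the uniform bound
  have hbound : ∀ n : ℤ × ℤ,
      ‖((Real.sign ((n.1 : ℝ) + α) + Real.sign ((n.2 : ℤ) : ℝ) : ℝ) : ℂ) *
        (y ^ (2 * (m : ℤ) * n.1 + n.2) *
          qp τ ((m : ℝ) * (n.1 : ℝ) ^ 2 + (n.1 : ℝ) * (n.2 : ℝ)))‖
      ≤ (2 * Real.exp (2 * Real.pi * t * m * α ^ 2)) *
        (Real.exp (-(2 * Real.pi * t * m) * ((n.1 : ℝ) + α) ^ 2) *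
          Real.exp (-(2 * Real.pi * t * δ) * |(n.2 : ℝ)|)) := by
    rintro ⟨k, l⟩
    rw [hFnorm ⟨k, l⟩]
    by_cases hc : Real.sign ((k : ℝ) + α) + Real.sign ((l : ℤ) : ℝ) = 0
    · rw [hc, abs_zero, zero_mul]; positivity
    · have hcoef : |Real.sign ((k : ℝ) + α) + Real.sign ((l : ℤ) : ℝ)| ≤ 2 := by
        calc |Real.sign ((k : ℝ) + α) + Real.sign ((l : ℤ) : ℝ)|
            ≤ |Real.sign ((k : ℝ) + α)| + |Real.sign ((l : ℤ) : ℝ)| := abs_add_le _ _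
          _ ≤ 2 := by linarith [abs_sign_le_one ((k : ℝ) + α), abs_sign_le_one ((l : ℤ) : ℝ)]
      have hlk : δ * |(l : ℝ)| ≤ (l : ℝ) * ((k : ℝ) + α) := by
        rcases lt_trichotomy l 0 with hl | hl | hl
        · have hl' : ((l : ℤ) : ℝ) < 0 := by exact_mod_cast hl
          have hsl : Real.sign ((l : ℤ) : ℝ) = -1 := Real.sign_of_neg hl'
          have hka : (k : ℝ) + α < 0 := by
            rcases lt_or_gt_of_ne (hne k) with h | h
            · exact h
            · exfalso; rw [Real.sign_of_pos h, hsl] at hc; norm_num at hc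
          have h1 : δ ≤ -((k : ℝ) + α) := by
            have := habs k; rwa [abs_of_neg hka] at this
          have h2 : |(l : ℝ)| = -(l : ℝ) := abs_of_neg hl'
          rw [h2]
          nlinarith
        · subst hl; simp
        · have hl' : (0 : ℝ) < ((l : ℤ) : ℝ) := by exact_mod_cast hl
          have hsl : Real.sign ((l : ℤ) : ℝ) = 1 := Real.sign_of_pos hl'
          have hka : 0 < (k : ℝ) + α := by
            rcases lt_or_gt_of_ne (hne k) with h | h
            · exfalso; rw [Real.sign_of_neg h, hsl] at hc; norm_num at hc
            · exact h
          have h1 : δ ≤ (k : ℝ) + α := by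
            have := habs k; rwa [abs_of_pos hka] at this
          have h2 : |(l : ℝ)| = (l : ℝ) := abs_of_pos hl'
          rw [h2]
          nlinarith
      have hexp : -(2 * Real.pi * (((2 * (m : ℤ) * k + l : ℤ) : ℝ) * a
            + ((m : ℝ) * (k : ℝ) ^ 2 + (k : ℝ) * (l : ℝ)) * t))
          ≤ 2 * Real.pi * t * m * α ^ 2 + (-(2 * Real.pi * t * m) * ((k : ℝ) + α) ^ 2
            + -(2 * Real.pi * t * δ) * |(l : ℝ)|) := by
        have h2πt : (0 : ℝ) ≤ 2 * Real.pi * t := by positivity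
        have hh := mul_le_mul_of_nonneg_left hlk h2πt
        rw [haa]
        push_cast
        nlinarith [hh]
      have hrhs : (2 * Real.exp (2 * Real.pi * t * m * α ^ 2)) *
          (Real.exp (-(2 * Real.pi * t * m) * ((k : ℝ) + α) ^ 2) *
            Real.exp (-(2 * Real.pi * t * δ) * |(l : ℝ)|))
          = 2 * Real.exp (2 * Real.pi * t * m * α ^ 2 + (-(2 * Real.pi * t * m) * ((k : ℝ) + α) ^ 2
            + -(2 * Real.pi * t * δ) * |(l : ℝ)|)) := by
        rw [Real.exp_add, Real.exp_add]; ring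
      rw [hrhs]
      calc |Real.sign ((k : ℝ) + α) + Real.sign ((l : ℤ) : ℝ)| *
            Real.exp (-(2 * Real.pi * (((2 * (m : ℤ) * k + l : ℤ) : ℝ) * a
              + ((m : ℝ) * (k : ℝ) ^ 2 + (k : ℝ) * (l : ℝ)) * t)))
          ≤ 2 * Real.exp (-(2 * Real.pi * (((2 * (m : ℤ) * k + l : ℤ) : ℝ) * a
              + ((m : ℝ) * (k : ℝ) ^ 2 + (k : ℝ) * (l : ℝ)) * t))) :=
            mul_le_mul_of_nonneg_right hcoef (Real.exp_pos _).le
        _ ≤ 2 * Real.exp (2 * Real.pi * t * m * α ^ 2 + (-(2 * Real.pi * t * m) * ((k : ℝ) + α) ^ 2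
              + -(2 * Real.pi * t * δ) * |(l : ℝ)|)) := by
            have := Real.exp_le_exp.mpr hexp
            linarith
  -- summability of the bound
  have hc1 : (0 : ℝ) < 2 * Real.pi * t * m := by positivity
  have hc2 : (0 : ℝ) < 2 * Real.pi * t * δ := by positivity
  have hS1 : Summable fun k : ℤ => Real.exp (-(2 * Real.pi * t * m) * ((k : ℝ) + α) ^ 2) := by
    refine Summable.of_nonneg_of_le (fun _ => (Real.exp_pos _).le) (fun k => ?_)
      ((summable_exp_neg_abs hc1).mul_left (Real.exp (3 * (2 * Real.pi * t * m))))
    · rw [← Real.exp_add, Real.exp_le_exp]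
      have h1 : -|(k : ℝ)| ≤ (k : ℝ) * α := by
        nlinarith [neg_abs_le ((k : ℝ) * α), abs_mul (k : ℝ) α, abs_nonneg (k : ℝ),
          abs_nonneg ((k : ℝ) * α), hα1.le]
      have h2 : |(k : ℝ)| - 3 ≤ ((k : ℝ) + α) ^ 2 := by
        nlinarith [_root_.sq_abs (k : ℝ), sq_nonneg (|(k : ℝ)| - 3 / 2), sq_nonneg α]
      have h3 := mul_le_mul_of_nonneg_left h2 hc1.le
      nlinarith [h3]
  have hS2 : Summable fun l : ℤ => Real.exp (-(2 * Real.pi * t * δ) * |(l : ℝ)|) :=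
    summable_exp_neg_abs hc2
  have hB : Summable fun n : ℤ × ℤ =>
      (2 * Real.exp (2 * Real.pi * t * m * α ^ 2)) *
        (Real.exp (-(2 * Real.pi * t * m) * ((n.1 : ℝ) + α) ^ 2) *
          Real.exp (-(2 * Real.pi * t * δ) * |(n.2 : ℝ)|)) :=
    (hS1.mul_of_nonneg hS2 (fun _ => (Real.exp_pos _).le) (fun _ => (Real.exp_pos _).le)).mul_left _
  -- summability of the norms of the double series
  have hnorm2 : Summable (fun n : ℤ × ℤ =>
      ‖((Real.sign ((n.1 : ℝ) + α) + Real.sign ((n.2 : ℤ) : ℝ) : ℝ) : ℂ) *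
        (y ^ (2 * (m : ℤ) * n.1 + n.2) *
          qp τ ((m : ℝ) * (n.1 : ℝ) ^ 2 + (n.1 : ℝ) * (n.2 : ℝ)))‖) :=
    Summable.of_nonneg_of_le (fun _ => norm_nonneg _) hbound hB
  have hsumF : Summable (fun n : ℤ × ℤ =>
      ((Real.sign ((n.1 : ℝ) + α) + Real.sign ((n.2 : ℤ) : ℝ) : ℝ) : ℂ) *
        (y ^ (2 * (m : ℤ) * n.1 + n.2) *
          qp τ ((m : ℝ) * (n.1 : ℝ) ^ 2 + (n.1 : ℝ) * (n.2 : ℝ)))) :=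
    hnorm2.of_norm
  have hterm : ∀ k : ℤ,
      y ^ (2 * k * (m : ℤ)) * qp τ ((m : ℝ) * (k : ℝ) ^ 2) *
        ((y * qp τ (k : ℝ) + 1) / (y * qp τ (k : ℝ) - 1))
      = -∑' l : ℤ, ((Real.sign ((k : ℝ) + α) + Real.sign ((l : ℤ) : ℝ) : ℝ) : ℂ) *
          (y ^ (2 * (m : ℤ) * k + l) * qp τ ((m : ℝ) * (k : ℝ) ^ 2 + (k : ℝ) * (l : ℝ))) := by
    intro k
    rw [(key k).tsum_eq, neg_neg]
  refine ⟨?_, ?_, ?_⟩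
  · -- first summability
    apply Summable.of_nonneg_of_le (fun _ => norm_nonneg _) _
      (((summable_prod_of_nonneg (fun _ => norm_nonneg _)).mp hnorm2).2)
    intro k
    rw [hterm k, norm_neg]
    exact norm_tsum_le_tsum_norm (hnorm2.prod_factor k)
  · exact hnorm2
  · calc (∑' k : ℤ, y ^ (2 * k * (m : ℤ)) * qp τ ((m : ℝ) * (k : ℝ) ^ 2) *
        ((y * qp τ (k : ℝ) + 1) / (y * qp τ (k : ℝ) - 1)))
        = ∑' k : ℤ, -∑' l : ℤ, ((Real.sign ((k : ℝ) + α) + Real.sign ((l : ℤ) : ℝ) : ℝ) : ℂ) *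
            (y ^ (2 * (m : ℤ) * k + l) * qp τ ((m : ℝ) * (k : ℝ) ^ 2 + (k : ℝ) * (l : ℝ))) :=
          tsum_congr hterm
      _ = -∑' (k : ℤ) (l : ℤ), ((Real.sign ((k : ℝ) + α) + Real.sign ((l : ℤ) : ℝ) : ℝ) : ℂ) *
            (y ^ (2 * (m : ℤ) * k + l) * qp τ ((m : ℝ) * (k : ℝ) ^ 2 + (k : ℝ) * (l : ℝ))) :=
          tsum_neg
      _ = -∑' n : ℤ × ℤ, ((Real.sign ((n.1 : ℝ) + α) + Real.sign ((n.2 : ℤ) : ℝ) : ℝ) : ℂ) *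
            (y ^ (2 * (m : ℤ) * n.1 + n.2) *
              qp τ ((m : ℝ) * (n.1 : ℝ) ^ 2 + (n.1 : ℝ) * (n.2 : ℝ))) := by
          exact congrArg Neg.neg (Summable.tsum_prod hsumF).symm
end

section
/- Let m and N be positive integers, let a ∈ ℚ with 0 < a < 1, let b ∈ ℝ and τ ∈ ℍ, and set Y := e^{2πi(aNτ + b)}. Then Σ_{k∈ℤ} Y^{2km} q^{Nmk²} (Y q^{Nk} + 1)/(Y q^{Nk} − 1) = − 2 q^{−Nma²} · [ Σ_{(n₁,n₂)∈ℤ², n₁≥0, n₂≥0} e^{2πi(2mn₁+n₂)b} q^{N( m(n₁+a)² + (n₁+a)n₂ )} − Σ_{(n₁,n₂)∈ℤ², n₁<0, n₂<0} e^{2πi(2mn₁+n₂)b} q^{N( m(n₁+a)² + (n₁+a)n₂ )} ] + q^{−Nma²} · Σ_{n∈ℤ} e^{4πi m n b} q^{N m (n+a)²}, and all series converge absolutely. (This is the paper's Corollary expressing μ_{m,0}(aNτ+b, Nτ) through the cone vertex algebra trace function: the bracketed cone sum equals η(τ)²·T^{(N)}_{(a,0),(b,0)}(τ) for the rank-2 lattice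 with Gram matrix N·[[2m,1],[1,0]], and the last term is the boundary theta-series correction.) -/
open Complex Real

lemma norm_ph (x : ℝ) : ‖ph x‖ = 1 := by
  rw [ph, Complex.norm_exp]
  simp [Complex.mul_re, Complex.mul_im]

noncomputable def thf (m N : ℕ) (A b : ℝ) (τ : ℂ) (n : ℤ) : ℂ :=
  ph (2 * (m : ℝ) * (n : ℝ) * b) * qp τ ((N : ℝ) * (m : ℝ) * ((n : ℝ) + A) ^ 2)

noncomputable def CCf (m N : ℕ) (A b : ℝ) (τ : ℂ) (p : ℤ × ℤ) : ℂ :=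
  ph ((2 * (m : ℝ) * (p.1 : ℝ) + (p.2 : ℝ)) * b) *
    qp τ ((N : ℝ) * ((m : ℝ) * ((p.1 : ℝ) + A) ^ 2 + ((p.1 : ℝ) + A) * (p.2 : ℝ)))

noncomputable def wwf (N : ℕ) (A b : ℝ) (τ : ℂ) (k : ℤ) : ℂ :=
  ph b * qp τ ((N : ℝ) * ((k : ℝ) + A))

noncomputable def GGf (m N : ℕ) (A b : ℝ) (τ : ℂ) (p : ℤ × ℤ) : ℂ :=
  (-2) * (if 0 ≤ p.1 ∧ 0 ≤ p.2 then CCf m N A b τ p else 0) +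
  2 * (if p.1 < 0 ∧ p.2 < 0 then CCf m N A b τ p else 0) +
  (if p.2 = 0 then thf m N A b τ p.1 else 0)

lemma ww_ne_zero (N : ℕ) (A b : ℝ) (τ : ℂ) (k : ℤ) : wwf N A b τ k ≠ 0 :=
  mul_ne_zero (Complex.exp_ne_zero _) (Complex.exp_ne_zero _)

lemma norm_wwf (N : ℕ) (A b : ℝ) (τ : ℂ) (k : ℤ) :
    ‖wwf N A b τ k‖ = Real.exp (-(2 * Real.pi * ((N : ℝ) * ((k : ℝ) + A)) * τ.im)) := by
  rw [wwf, norm_mul, norm_ph, one_mul, norm_qp]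

lemma norm_CCf (m N : ℕ) (A b : ℝ) (τ : ℂ) (p : ℤ × ℤ) :
    ‖CCf m N A b τ p‖ = Real.exp (-(2 * Real.pi *
      ((N : ℝ) * ((m : ℝ) * ((p.1 : ℝ) + A) ^ 2 + ((p.1 : ℝ) + A) * (p.2 : ℝ))) * τ.im)) := by
  rw [CCf, norm_mul, norm_ph, one_mul, norm_qp]

lemma norm_thf (m N : ℕ) (A b : ℝ) (τ : ℂ) (n : ℤ) :
    ‖thf m N A b τ n‖ = Real.exp (-(2 * Real.pi *
      ((N : ℝ) * (m : ℝ) * ((n : ℝ) + A) ^ 2) * τ.im)) := by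
  rw [thf, norm_mul, norm_ph, one_mul, norm_qp]

lemma CCf_eq (m N : ℕ) (A b : ℝ) (τ : ℂ) (k n : ℤ) :
    CCf m N A b τ (k, n) = thf m N A b τ k * (wwf N A b τ k) ^ n := by
  rw [CCf, thf, wwf]
  simp only [ph, qp, ← Complex.exp_add, ← Complex.exp_int_mul]
  congr 1
  push_cast
  ring

lemma T_eq (m N : ℕ) (A b : ℝ) (τ : ℂ) (Y : ℂ)
    (hY : Y = Complex.exp (2 * Real.pi * Complex.I * (((A : ℝ) : ℂ) * N * τ + b))) (k : ℤ) :
    Y ^ (2 * k * (m : ℤ)) * qp τ ((N : ℝ) * (m : ℝ) * (k : ℝ) ^ 2) =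
      qp τ (-((N : ℝ) * (m : ℝ) * A ^ 2)) * thf m N A b τ k := by
  subst hY
  rw [thf]
  simp only [ph, qp, ← Complex.exp_add, ← Complex.exp_int_mul]
  congr 1
  push_cast
  ring

lemma w_eq (N : ℕ) (A b : ℝ) (τ : ℂ) (Y : ℂ)
    (hY : Y = Complex.exp (2 * Real.pi * Complex.I * (((A : ℝ) : ℂ) * N * τ + b))) (k : ℤ) :
    Y * qp τ ((N : ℝ) * (k : ℝ)) = wwf N A b τ k := by
  subst hY
  rw [wwf]
  simp only [ph, qp, ← Complex.exp_add]
  congr 1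
  push_cast
  ring

lemma summable_exp_int_nonneg (s : ℝ) (hs : 0 < s) :
    Summable (fun k : ℤ => if 0 ≤ k then Real.exp (-(s * k)) else 0) := by
  rw [← Function.Injective.summable_iff (f := fun k : ℤ => if 0 ≤ k then Real.exp (-(s * k)) else 0)
      (g := fun n : ℕ => (n : ℤ)) (fun x y h => by simpa using h)
      (by intro x hx; simp only [Set.mem_range, not_exists] at hx
          have : x < 0 := by
            by_contra h
            exact hx x.toNat (by omega)
          simp [not_le.mpr this])]
  have : ((fun k : ℤ => if 0 ≤ k then Real.exp (-(s * k)) else 0) ∘ (fun n : ℕ => (n : ℤ)))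
      = fun n : ℕ => (Real.exp (-s)) ^ n := by
    funext n
    simp only [Function.comp_apply, Int.cast_natCast, if_pos (Int.natCast_nonneg n)]
    rw [← Real.exp_nat_mul]
    ring_nf
  rw [this]
  exact summable_geometric_of_lt_one (Real.exp_nonneg _) (Real.exp_lt_one_iff.mpr (by linarith))

lemma summable_exp_int_neg (s : ℝ) (hs : 0 < s) :
    Summable (fun k : ℤ => if k < 0 then Real.exp (s * k) else 0) := by
  rw [← Function.Injective.summable_iff (f := fun k : ℤ => if k < 0 then Real.exp (s * k) else 0)
      (g := fun n : ℕ => (-(n : ℤ) - 1)) (fun x y h => by simp only at h; omega)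
      (by intro x hx; simp only [Set.mem_range, not_exists] at hx
          have : 0 ≤ x := by
            by_contra h
            exact hx (-x - 1).toNat (by omega)
          simp [not_lt.mpr this])]
  have : ((fun k : ℤ => if k < 0 then Real.exp (s * k) else 0) ∘ (fun n : ℕ => (-(n : ℤ) - 1)))
      = fun n : ℕ => Real.exp (-s) * (Real.exp (-s)) ^ n := by
    funext n
    simp only [Function.comp_apply, if_pos (by omega : (-(n : ℤ) - 1) < 0)]
    rw [← Real.exp_nat_mul, ← Real.exp_add]
    push_cast
    ring_nf
  rw [this]
  exact (summable_geometric_of_lt_one (Real.exp_nonneg _)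
    (Real.exp_lt_one_iff.mpr (by linarith))).mul_left _

section
variable {m N : ℕ} {A b : ℝ} {τ : ℂ}

lemma summable_coneA (hm : 0 < m) (hN : 0 < N) (hA0 : 0 < A) (ht : 0 < τ.im) :
    Summable (fun p : ℤ × ℤ => if 0 ≤ p.1 ∧ 0 ≤ p.2 then ‖CCf m N A b τ p‖ else 0) := by
  have hπ : (0:ℝ) < 2 * Real.pi * τ.im := by have := Real.pi_pos; positivity
  have hN' : (0:ℝ) < N := by exact_mod_cast hN
  have hm' : (1:ℝ) ≤ m := by exact_mod_cast hm
  have hc : 0 < 2 * Real.pi * τ.im * ((N : ℝ) * A) := by positivity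
  apply Summable.of_nonneg_of_le
    (g := fun p : ℤ × ℤ => if 0 ≤ p.1 ∧ 0 ≤ p.2 then ‖CCf m N A b τ p‖ else 0)
    (f := fun p : ℤ × ℤ =>
      (if 0 ≤ p.1 then Real.exp (-(2 * Real.pi * τ.im * ((N : ℝ) * A) * p.1)) else 0) *
      (if 0 ≤ p.2 then Real.exp (-(2 * Real.pi * τ.im * ((N : ℝ) * A) * p.2)) else 0))
  · intro p
    split_ifs
    · exact norm_nonneg _
    · exact le_rfl
  · intro p
    by_cases h : 0 ≤ p.1 ∧ 0 ≤ p.2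
    · rw [if_pos h, if_pos h.1, if_pos h.2, norm_CCf, ← Real.exp_add]
      obtain ⟨h1, h2⟩ := h
      apply Real.exp_le_exp.mpr
      have hx : (0:ℝ) ≤ (p.1 : ℝ) := by exact_mod_cast h1
      have hy : (0:ℝ) ≤ (p.2 : ℝ) := by exact_mod_cast h2
      have key : A * (p.1 : ℝ) + A * (p.2 : ℝ) ≤
          (m : ℝ) * ((p.1 : ℝ) + A) ^ 2 + ((p.1 : ℝ) + A) * (p.2 : ℝ) := by
        nlinarith [sq_nonneg ((p.1 : ℝ) + A), mul_nonneg hx hy, mul_nonneg hA0.le hx,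
          mul_nonneg hA0.le hy, sq_nonneg (p.1 : ℝ)]
      linarith [mul_le_mul_of_nonneg_left key (mul_pos hπ hN').le]
    · rw [if_neg h]
      positivity
  · have h := (summable_exp_int_nonneg _ hc).mul_of_nonneg (summable_exp_int_nonneg _ hc)
      (fun k => by dsimp only; split_ifs <;> first | exact Real.exp_nonneg _ | exact le_rfl)
      (fun k => by dsimp only; split_ifs <;> first | exact Real.exp_nonneg _ | exact le_rfl)
    exact h

lemma summable_coneB (hm : 0 < m) (hN : 0 < N) (hA0 : 0 < A) (hA1 : A < 1) (ht : 0 < τ.im) :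
    Summable (fun p : ℤ × ℤ => if p.1 < 0 ∧ p.2 < 0 then ‖CCf m N A b τ p‖ else 0) := by
  have hπ : (0:ℝ) < 2 * Real.pi * τ.im := by have := Real.pi_pos; positivity
  have hN' : (0:ℝ) < N := by exact_mod_cast hN
  have hm' : (1:ℝ) ≤ m := by exact_mod_cast hm
  have hc1 : 0 < 2 * Real.pi * τ.im * ((N : ℝ) * m) := by positivity
  have hc2 : 0 < 2 * Real.pi * τ.im * ((N : ℝ) * (1 - A)) := by
    have : (0:ℝ) < 1 - A := by linarith
    positivity
  apply Summable.of_nonneg_of_le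
    (g := fun p : ℤ × ℤ => if p.1 < 0 ∧ p.2 < 0 then ‖CCf m N A b τ p‖ else 0)
    (f := fun p : ℤ × ℤ =>
      (Real.exp (2 * Real.pi * τ.im * ((N : ℝ) * m)) *
        (if p.1 < 0 then Real.exp (2 * Real.pi * τ.im * ((N : ℝ) * m) * p.1) else 0)) *
      (if p.2 < 0 then Real.exp (2 * Real.pi * τ.im * ((N : ℝ) * (1 - A)) * p.2) else 0))
  · intro p
    split_ifs
    · exact norm_nonneg _
    · exact le_rfl
  · intro p
    by_cases h : p.1 < 0 ∧ p.2 < 0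
    · rw [if_pos h, if_pos h.1, if_pos h.2, norm_CCf, ← Real.exp_add, ← Real.exp_add]
      obtain ⟨h1, h2⟩ := h
      apply Real.exp_le_exp.mpr
      have hx : (p.1 : ℝ) ≤ -1 := by exact_mod_cast (show p.1 ≤ -1 by omega)
      have hy : (p.2 : ℝ) ≤ -1 := by exact_mod_cast (show p.2 ≤ -1 by omega)
      have key : (m : ℝ) * (-(p.1 : ℝ) - 1) + (1 - A) * (-(p.2 : ℝ)) ≤
          (m : ℝ) * ((p.1 : ℝ) + A) ^ 2 + ((p.1 : ℝ) + A) * (p.2 : ℝ) := by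
        have h2' : ((p.1 : ℝ) + A) * (p.2 : ℝ) ≥ (1 - A) * (-(p.2 : ℝ)) := by nlinarith
        have h1' : (m : ℝ) * ((p.1 : ℝ) + A) ^ 2 ≥ (m : ℝ) * (-(p.1 : ℝ) - 1) := by
          rcases (by omega : p.1 = -1 ∨ p.1 ≤ -2) with h | h
          · rw [h]; push_cast; nlinarith [sq_nonneg (A - 1)]
          · have hx2 : (p.1 : ℝ) ≤ -2 := by exact_mod_cast h
            have base : (-(p.1 : ℝ) - 1) ≤ ((p.1 : ℝ) + A) ^ 2 := by
              nlinarith [mul_nonneg (by linarith : (0:ℝ) ≤ -((p.1:ℝ)+1))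
                  (by linarith : (0:ℝ) ≤ -((p.1:ℝ)+2)),
                mul_nonneg (by linarith : (0:ℝ) ≤ 1-A)
                  (by linarith : (0:ℝ) ≤ -(2*(p.1:ℝ)+A+1))]
            exact mul_le_mul_of_nonneg_left base (by linarith)
        linarith
      linarith [mul_le_mul_of_nonneg_left key (mul_pos hπ hN').le]
    · rw [if_neg h]
      positivity
  · have h := ((summable_exp_int_neg _ hc1).mul_left
        (Real.exp (2 * Real.pi * τ.im * ((N : ℝ) * m)))).mul_of_nonneg
        (summable_exp_int_neg _ hc2)
      (fun k => by dsimp only; split_ifs <;>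
        first | positivity | simp)
      (fun k => by dsimp only; split_ifs <;> first | exact Real.exp_nonneg _ | exact le_rfl)
    exact h

lemma summable_theta (hm : 0 < m) (hN : 0 < N) (hA0 : 0 < A) (hA1 : A < 1) (ht : 0 < τ.im) :
    Summable (fun n : ℤ => ‖thf m N A b τ n‖) := by
  have hπ : (0:ℝ) < 2 * Real.pi * τ.im := by have := Real.pi_pos; positivity
  have hN' : (0:ℝ) < N := by exact_mod_cast hN
  have hm' : (1:ℝ) ≤ m := by exact_mod_cast hm
  have hc1 : 0 < 2 * Real.pi * τ.im * ((N : ℝ) * m * A) := by positivity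
  have hc2 : 0 < 2 * Real.pi * τ.im * ((N : ℝ) * m) := by positivity
  apply Summable.of_nonneg_of_le (g := fun n : ℤ => ‖thf m N A b τ n‖)
    (f := fun n : ℤ =>
      (if 0 ≤ n then Real.exp (-(2 * Real.pi * τ.im * ((N : ℝ) * m * A) * n)) else 0) +
      Real.exp (2 * Real.pi * τ.im * ((N : ℝ) * m)) *
        (if n < 0 then Real.exp (2 * Real.pi * τ.im * ((N : ℝ) * m) * n) else 0))
  · intro n; exact norm_nonneg _
  · intro n
    rw [norm_thf]
    rcases le_or_gt 0 n with h | h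
    · rw [if_pos h, if_neg (not_lt.mpr h), mul_zero, add_zero]
      apply Real.exp_le_exp.mpr
      have hx : (0:ℝ) ≤ (n : ℝ) := by exact_mod_cast h
      have key : (m : ℝ) * A * (n : ℝ) ≤ (m : ℝ) * ((n : ℝ) + A) ^ 2 := by
        nlinarith [mul_nonneg hA0.le hx, sq_nonneg (n : ℝ), sq_nonneg A]
      linarith [mul_le_mul_of_nonneg_left key (mul_pos hπ hN').le]
    · rw [if_neg (not_le.mpr h), if_pos h, zero_add, ← Real.exp_add]
      apply Real.exp_le_exp.mpr
      have hx : (n : ℝ) ≤ -1 := by exact_mod_cast (show n ≤ -1 by omega)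
      have key : (m : ℝ) * (-(n : ℝ) - 1) ≤ (m : ℝ) * ((n : ℝ) + A) ^ 2 := by
        rcases (by omega : n = -1 ∨ n ≤ -2) with h' | h'
        · rw [h']; push_cast; nlinarith [sq_nonneg (A - 1)]
        · have hx2 : (n : ℝ) ≤ -2 := by exact_mod_cast h'
          have base : (-(n : ℝ) - 1) ≤ ((n : ℝ) + A) ^ 2 := by
            nlinarith [mul_nonneg (by linarith : (0:ℝ) ≤ -((n:ℝ)+1))
                (by linarith : (0:ℝ) ≤ -((n:ℝ)+2)),
              mul_nonneg (by linarith : (0:ℝ) ≤ 1-A)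
                (by linarith : (0:ℝ) ≤ -(2*(n:ℝ)+A+1))]
          exact mul_le_mul_of_nonneg_left base (by linarith)
      linarith [mul_le_mul_of_nonneg_left key (mul_pos hπ hN').le]
  · exact (summable_exp_int_nonneg _ hc1).add
      ((summable_exp_int_neg _ hc2).mul_left _)
end

lemma norm_ite_eq (c : Prop) [Decidable c] (x : ℂ) :
    ‖(if c then x else 0)‖ = if c then ‖x‖ else 0 := by
  split_ifs <;> simp

lemma key_term (m N : ℕ) (hm : 0 < m) (hN : 0 < N) (A b : ℝ) (hA0 : 0 < A) (hA1 : A < 1)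
    (τ : ℂ) (ht : 0 < τ.im) (Y : ℂ)
    (hY : Y = Complex.exp (2 * Real.pi * Complex.I * (((A : ℝ) : ℂ) * N * τ + b))) (k : ℤ)
    (hfibA : Summable (fun n₂ : ℤ => if 0 ≤ k ∧ 0 ≤ n₂ then CCf m N A b τ (k, n₂) else 0))
    (hfibB : Summable (fun n₂ : ℤ => if k < 0 ∧ n₂ < 0 then CCf m N A b τ (k, n₂) else 0)) :
    Y ^ (2 * k * (m : ℤ)) * qp τ ((N : ℝ) * (m : ℝ) * (k : ℝ) ^ 2) *
        ((Y * qp τ ((N : ℝ) * (k : ℝ)) + 1) / (Y * qp τ ((N : ℝ) * (k : ℝ)) - 1)) =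
      qp τ (-((N : ℝ) * (m : ℝ) * A ^ 2)) * ∑' n₂ : ℤ, GGf m N A b τ (k, n₂) := by
  have hπ : (0:ℝ) < 2 * Real.pi * τ.im := by have := Real.pi_pos; positivity
  have hN' : (0:ℝ) < N := by exact_mod_cast hN
  have hsplit : ∑' n₂ : ℤ, GGf m N A b τ (k, n₂)
      = -2 * (∑' n₂ : ℤ, if 0 ≤ k ∧ 0 ≤ n₂ then CCf m N A b τ (k, n₂) else 0)
        + 2 * (∑' n₂ : ℤ, if k < 0 ∧ n₂ < 0 then CCf m N A b τ (k, n₂) else 0)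
        + thf m N A b τ k := by
    have hD : Summable (fun n₂ : ℤ => if n₂ = 0 then thf m N A b τ k else 0) :=
      (hasSum_ite_eq (0 : ℤ) (thf m N A b τ k)).summable
    have e1 : ∑' n₂ : ℤ, GGf m N A b τ (k, n₂)
        = ∑' n₂ : ℤ, (((-2) * (if 0 ≤ k ∧ 0 ≤ n₂ then CCf m N A b τ (k, n₂) else 0)
            + 2 * (if k < 0 ∧ n₂ < 0 then CCf m N A b τ (k, n₂) else 0))
            + (if n₂ = 0 then thf m N A b τ k else 0)) := rfl
    rw [e1, Summable.tsum_add ((hfibA.mul_left (-2)).add (hfibB.mul_left 2)) hD,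
      Summable.tsum_add (hfibA.mul_left (-2)) (hfibB.mul_left 2), tsum_mul_left, tsum_mul_left,
      tsum_ite_eq]
  rw [w_eq N A b τ Y hY k, T_eq m N A b τ Y hY k, hsplit]
  have hwne : wwf N A b τ k ≠ 0 := ww_ne_zero N A b τ k
  rcases le_or_gt 0 k with hk | hk
  · -- k ≥ 0 : ‖w‖ < 1
    have hkA : (0:ℝ) < (k : ℝ) + A := by
      have : (0:ℝ) ≤ (k : ℝ) := by exact_mod_cast hk
      linarith
    have hw1 : ‖wwf N A b τ k‖ < 1 := by
      rw [norm_wwf]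
      apply Real.exp_lt_one_iff.mpr
      have : 0 < 2 * Real.pi * ((N : ℝ) * ((k : ℝ) + A)) * τ.im := by positivity
      linarith
    have hwne1 : wwf N A b τ k ≠ 1 := by
      intro hcon; rw [hcon] at hw1; simp at hw1
    have hAsum : (∑' n₂ : ℤ, if 0 ≤ k ∧ 0 ≤ n₂ then CCf m N A b τ (k, n₂) else 0)
        = thf m N A b τ k * (1 - wwf N A b τ k)⁻¹ := by
      rw [← Function.Injective.tsum_eq (g := fun n : ℕ => (n : ℤ))
        (fun x y h => by simpa using h)
        (by intro x hx
            rcases le_or_gt 0 x with h0 | h0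
            · exact ⟨x.toNat, by show ((x.toNat : ℕ) : ℤ) = x; omega⟩
            · exact absurd (if_neg fun hcon => absurd hcon.2 (not_le.mpr h0))
                (Function.mem_support.mp hx))]
      have hcong : ∀ n : ℕ, (if 0 ≤ k ∧ 0 ≤ ((n : ℤ)) then CCf m N A b τ (k, (n : ℤ)) else 0)
          = thf m N A b τ k * (wwf N A b τ k) ^ n := by
        intro n
        rw [if_pos ⟨hk, Int.natCast_nonneg n⟩, CCf_eq, zpow_natCast]
      rw [tsum_congr hcong, tsum_mul_left, tsum_geometric_of_norm_lt_one hw1]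
    have hBzero : (∑' n₂ : ℤ, if k < 0 ∧ n₂ < 0 then CCf m N A b τ (k, n₂) else 0) = 0 := by
      have : (fun n₂ : ℤ => if k < 0 ∧ n₂ < 0 then CCf m N A b τ (k, n₂) else 0)
          = fun _ => 0 := funext fun n₂ => if_neg (fun hcon => absurd hcon.1 (not_lt.mpr hk))
      rw [this, tsum_zero]
    rw [hAsum, hBzero]
    have h1 : (1:ℂ) - wwf N A b τ k ≠ 0 := sub_ne_zero.mpr (Ne.symm hwne1)
    have h2 : wwf N A b τ k - 1 ≠ 0 := sub_ne_zero.mpr hwne1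
    field_simp
    ring
  · -- k < 0 : ‖w‖ > 1
    have hkA : (k : ℝ) + A < 0 := by
      have : (k : ℝ) ≤ -1 := by exact_mod_cast (show k ≤ -1 by omega)
      linarith
    have hw1 : 1 < ‖wwf N A b τ k‖ := by
      rw [norm_wwf]
      apply Real.one_lt_exp_iff.mpr
      have : 2 * Real.pi * ((N : ℝ) * ((k : ℝ) + A)) * τ.im < 0 := by
        have h1 : (0:ℝ) < (N : ℝ) * (-((k : ℝ) + A)) := by
          have : (0:ℝ) < -((k : ℝ) + A) := by linarith
          positivity
        nlinarith
      linarith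
    have hwne1 : wwf N A b τ k ≠ 1 := by
      intro hcon; rw [hcon] at hw1; simp at hw1
    have hvlt : ‖(wwf N A b τ k)⁻¹‖ < 1 := by
      rw [norm_inv]
      exact inv_lt_one_of_one_lt₀ hw1
    have hAzero : (∑' n₂ : ℤ, if 0 ≤ k ∧ 0 ≤ n₂ then CCf m N A b τ (k, n₂) else 0) = 0 := by
      have : (fun n₂ : ℤ => if 0 ≤ k ∧ 0 ≤ n₂ then CCf m N A b τ (k, n₂) else 0)
          = fun _ => 0 := funext fun n₂ => if_neg (fun hcon => absurd hcon.1 (not_le.mpr hk))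
      rw [this, tsum_zero]
    have hBsum : (∑' n₂ : ℤ, if k < 0 ∧ n₂ < 0 then CCf m N A b τ (k, n₂) else 0)
        = thf m N A b τ k * (wwf N A b τ k)⁻¹ * (1 - (wwf N A b τ k)⁻¹)⁻¹ := by
      rw [← Function.Injective.tsum_eq (g := fun n : ℕ => (-(n : ℤ) - 1))
        (fun x y h => by simp only at h; omega)
        (by intro x hx
            rcases lt_or_ge x 0 with h0 | h0
            · exact ⟨(-x - 1).toNat, by show -(((-x - 1).toNat : ℕ) : ℤ) - 1 = x; omega⟩
            · exact absurd (if_neg fun hcon => absurd hcon.2 (not_lt.mpr h0))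
                (Function.mem_support.mp hx))]
      have hcong : ∀ n : ℕ, (if k < 0 ∧ (-(n : ℤ) - 1) < 0 then CCf m N A b τ (k, -(n : ℤ) - 1) else 0)
          = (thf m N A b τ k * (wwf N A b τ k)⁻¹) * ((wwf N A b τ k)⁻¹) ^ n := by
        intro n
        rw [if_pos ⟨hk, by omega⟩, CCf_eq]
        rw [show (-(n : ℤ) - 1) = -((n + 1 : ℕ) : ℤ) by push_cast; ring, zpow_neg,
          zpow_natCast, ← inv_pow, pow_succ]
        ring
      rw [tsum_congr hcong, tsum_mul_left, tsum_geometric_of_norm_lt_one hvlt]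
    rw [hAzero, hBsum]
    have h1 : (1:ℂ) - (wwf N A b τ k)⁻¹ ≠ 0 := by
      have hne : (wwf N A b τ k)⁻¹ ≠ 1 := by
        intro hcon
        rw [hcon] at hvlt
        simp at hvlt
      exact sub_ne_zero.mpr (Ne.symm hne)
    have h2 : wwf N A b τ k - 1 ≠ 0 := sub_ne_zero.mpr hwne1
    field_simp
    ring

lemma norm_GGf_le (m N : ℕ) (A b : ℝ) (τ : ℂ) (p : ℤ × ℤ) :
    ‖GGf m N A b τ p‖ ≤ (2 * (if 0 ≤ p.1 ∧ 0 ≤ p.2 then ‖CCf m N A b τ p‖ else 0) +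
      2 * (if p.1 < 0 ∧ p.2 < 0 then ‖CCf m N A b τ p‖ else 0)) +
      (if p.2 = 0 then ‖thf m N A b τ p.1‖ else 0) := by
  rw [GGf]
  refine le_trans (norm_add_le _ _) (add_le_add (le_trans (norm_add_le _ _)
    (add_le_add ?_ ?_)) ?_)
  · rw [norm_mul, norm_ite_eq]; simp
  · rw [norm_mul, norm_ite_eq]; simp
  · rw [norm_ite_eq]

/-- The paper's Corollary expressing `μ_{m,0}(aNτ+b, Nτ)` via the cone vertex algebra trace
function for the rank-2 lattice with Gram matrix `N·[[2m,1],[1,0]]`, for `0 < a < 1`: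
the bracketed cone sum is `η(τ)²·T^{(N)}_{(a,0),(b,0)}(τ)` and the last term is the
boundary theta-series correction. -/
theorem specialized_appell_lerch_cone_trace
    (m N : ℕ) (hm : 0 < m) (hN : 0 < N) (a : ℚ) (ha0 : 0 < a) (ha1 : a < 1)
    (b : ℝ) (τ : ℂ) (hτ : 0 < τ.im)
    (Y : ℂ) (hY : Y = Complex.exp (2 * Real.pi * Complex.I * ((a : ℂ) * N * τ + b))) :
    Summable (fun k : ℤ =>
      ‖Y ^ (2 * k * (m : ℤ)) * qp τ ((N : ℝ) * (m : ℝ) * (k : ℝ) ^ 2) *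
        ((Y * qp τ ((N : ℝ) * (k : ℝ)) + 1) / (Y * qp τ ((N : ℝ) * (k : ℝ)) - 1))‖) ∧
    Summable (fun n : ℤ × ℤ => if 0 ≤ n.1 ∧ 0 ≤ n.2 then
      ‖ph ((2 * (m : ℝ) * (n.1 : ℝ) + (n.2 : ℝ)) * b) *
        qp τ ((N : ℝ) * ((m : ℝ) * ((n.1 : ℝ) + (a : ℝ)) ^ 2 +
          ((n.1 : ℝ) + (a : ℝ)) * (n.2 : ℝ)))‖ else 0) ∧
    Summable (fun n : ℤ × ℤ => if n.1 < 0 ∧ n.2 < 0 then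
      ‖ph ((2 * (m : ℝ) * (n.1 : ℝ) + (n.2 : ℝ)) * b) *
        qp τ ((N : ℝ) * ((m : ℝ) * ((n.1 : ℝ) + (a : ℝ)) ^ 2 +
          ((n.1 : ℝ) + (a : ℝ)) * (n.2 : ℝ)))‖ else 0) ∧
    Summable (fun n : ℤ =>
      ‖ph (2 * (m : ℝ) * (n : ℝ) * b) *
        qp τ ((N : ℝ) * (m : ℝ) * ((n : ℝ) + (a : ℝ)) ^ 2)‖) ∧
    (∑' k : ℤ, Y ^ (2 * k * (m : ℤ)) * qp τ ((N : ℝ) * (m : ℝ) * (k : ℝ) ^ 2) *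
        ((Y * qp τ ((N : ℝ) * (k : ℝ)) + 1) / (Y * qp τ ((N : ℝ) * (k : ℝ)) - 1))) =
      -2 * qp τ (-((N : ℝ) * (m : ℝ) * (a : ℝ) ^ 2)) *
        ((∑' n : ℤ × ℤ, if 0 ≤ n.1 ∧ 0 ≤ n.2 then
            ph ((2 * (m : ℝ) * (n.1 : ℝ) + (n.2 : ℝ)) * b) *
              qp τ ((N : ℝ) * ((m : ℝ) * ((n.1 : ℝ) + (a : ℝ)) ^ 2 +
                ((n.1 : ℝ) + (a : ℝ)) * (n.2 : ℝ))) else 0) -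
         (∑' n : ℤ × ℤ, if n.1 < 0 ∧ n.2 < 0 then
            ph ((2 * (m : ℝ) * (n.1 : ℝ) + (n.2 : ℝ)) * b) *
              qp τ ((N : ℝ) * ((m : ℝ) * ((n.1 : ℝ) + (a : ℝ)) ^ 2 +
                ((n.1 : ℝ) + (a : ℝ)) * (n.2 : ℝ))) else 0)) +
      qp τ (-((N : ℝ) * (m : ℝ) * (a : ℝ) ^ 2)) *
        (∑' n : ℤ, ph (2 * (m : ℝ) * (n : ℝ) * b) *
          qp τ ((N : ℝ) * (m : ℝ) * ((n : ℝ) + (a : ℝ)) ^ 2)) := by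
  have hA0 : (0:ℝ) < (a : ℝ) := by exact_mod_cast ha0
  have hA1 : ((a : ℚ) : ℝ) < 1 := by exact_mod_cast ha1
  have hY' : Y = Complex.exp (2 * Real.pi * Complex.I *
      ((((a : ℝ)) : ℂ) * N * τ + b)) := by
    rw [hY]; norm_cast
  -- norm-summability of the pieces
  have sA_norm : Summable (fun p : ℤ × ℤ =>
      if 0 ≤ p.1 ∧ 0 ≤ p.2 then ‖CCf m N (a : ℝ) b τ p‖ else 0) :=
    summable_coneA hm hN hA0 hτ
  have sB_norm : Summable (fun p : ℤ × ℤ =>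
      if p.1 < 0 ∧ p.2 < 0 then ‖CCf m N (a : ℝ) b τ p‖ else 0) :=
    summable_coneB hm hN hA0 hA1 hτ
  have sTh_norm : Summable (fun n : ℤ => ‖thf m N (a : ℝ) b τ n‖) :=
    summable_theta hm hN hA0 hA1 hτ
  have sA : Summable (fun p : ℤ × ℤ =>
      if 0 ≤ p.1 ∧ 0 ≤ p.2 then CCf m N (a : ℝ) b τ p else 0) := by
    apply Summable.of_norm
    simpa only [norm_ite_eq] using sA_norm
  have sB : Summable (fun p : ℤ × ℤ =>
      if p.1 < 0 ∧ p.2 < 0 then CCf m N (a : ℝ) b τ p else 0) := by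
    apply Summable.of_norm
    simpa only [norm_ite_eq] using sB_norm
  have hinjD : Function.Injective (fun k : ℤ => ((k, (0:ℤ)) : ℤ × ℤ)) :=
    fun x y h => (Prod.ext_iff.mp h).1
  have hsuppD : ∀ F : ℤ → ℂ, Function.support (fun p : ℤ × ℤ =>
      if p.2 = 0 then F p.1 else 0) ⊆ Set.range (fun k : ℤ => ((k, (0:ℤ)) : ℤ × ℤ)) := by
    intro F p hp
    by_cases h : p.2 = 0
    · exact ⟨p.1, by rw [Prod.ext_iff]; exact ⟨rfl, h.symm⟩⟩
    · exact absurd (if_neg h) (Function.mem_support.mp hp)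
  have sD_norm : Summable (fun p : ℤ × ℤ =>
      if p.2 = 0 then ‖thf m N (a : ℝ) b τ p.1‖ else 0) := by
    apply (Function.Injective.summable_iff hinjD ?_).mp
    · exact sTh_norm
    · intro p hp
      by_cases h : p.2 = 0
      · exact absurd ⟨p.1, by rw [Prod.ext_iff]; exact ⟨rfl, h.symm⟩⟩ hp
      · exact if_neg h
  have sD : Summable (fun p : ℤ × ℤ =>
      if p.2 = 0 then thf m N (a : ℝ) b τ p.1 else 0) := by
    apply Summable.of_norm
    simpa only [norm_ite_eq] using sD_norm
  have hGnorm : Summable (fun p : ℤ × ℤ => ‖GGf m N (a : ℝ) b τ p‖) := by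
    apply Summable.of_nonneg_of_le (fun p => norm_nonneg _)
      (fun p => norm_GGf_le m N (a : ℝ) b τ p)
    exact ((sA_norm.mul_left 2).add (sB_norm.mul_left 2)).add sD_norm
  have hG : Summable (fun p : ℤ × ℤ => GGf m N (a : ℝ) b τ p) := hGnorm.of_norm
  have key : ∀ k : ℤ,
      Y ^ (2 * k * (m : ℤ)) * qp τ ((N : ℝ) * (m : ℝ) * (k : ℝ) ^ 2) *
          ((Y * qp τ ((N : ℝ) * (k : ℝ)) + 1) / (Y * qp τ ((N : ℝ) * (k : ℝ)) - 1)) =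
        qp τ (-((N : ℝ) * (m : ℝ) * ((a : ℝ)) ^ 2)) * ∑' n₂ : ℤ, GGf m N (a : ℝ) b τ (k, n₂) :=
    fun k => key_term m N hm hN (a : ℝ) b hA0 hA1 τ hτ Y hY' k
      (sA.prod_factor k) (sB.prod_factor k)
  have houter : Summable (fun k : ℤ => ∑' n₂ : ℤ, ‖GGf m N (a : ℝ) b τ (k, n₂)‖) :=
    (hGnorm.hasSum.prod_fiberwise (fun k => (hGnorm.prod_factor k).hasSum)).summable
  refine ⟨?_, sA_norm, sB_norm, sTh_norm, ?_⟩
  · -- summability of the Appell–Lerch series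
    refine Summable.of_nonneg_of_le (fun k => norm_nonneg _) (fun k => ?_)
      (houter.mul_left ‖qp τ (-((N : ℝ) * (m : ℝ) * ((a : ℝ)) ^ 2))‖)
    rw [key k, norm_mul]
    exact mul_le_mul_of_nonneg_left
      (norm_tsum_le_tsum_norm (hGnorm.prod_factor k)) (norm_nonneg _)
  · -- the identity
    have hTH : (∑' p : ℤ × ℤ, if p.2 = 0 then thf m N (a : ℝ) b τ p.1 else 0)
        = ∑' n : ℤ, thf m N (a : ℝ) b τ n := by
      rw [← Function.Injective.tsum_eq hinjD (hsuppD _)]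
      exact tsum_congr fun k => if_pos rfl
    have hsplitG : (∑' p : ℤ × ℤ, GGf m N (a : ℝ) b τ p)
        = -2 * (∑' p : ℤ × ℤ, if 0 ≤ p.1 ∧ 0 ≤ p.2 then CCf m N (a : ℝ) b τ p else 0)
          + 2 * (∑' p : ℤ × ℤ, if p.1 < 0 ∧ p.2 < 0 then CCf m N (a : ℝ) b τ p else 0)
          + (∑' n : ℤ, thf m N (a : ℝ) b τ n) := by
      have e1 : (∑' p : ℤ × ℤ, GGf m N (a : ℝ) b τ p)
          = ∑' p : ℤ × ℤ, (((-2) * (if 0 ≤ p.1 ∧ 0 ≤ p.2 then CCf m N (a : ℝ) b τ p else 0)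
              + 2 * (if p.1 < 0 ∧ p.2 < 0 then CCf m N (a : ℝ) b τ p else 0))
              + (if p.2 = 0 then thf m N (a : ℝ) b τ p.1 else 0)) := rfl
      rw [e1, Summable.tsum_add ((sA.mul_left (-2)).add (sB.mul_left 2)) sD,
        Summable.tsum_add (sA.mul_left (-2)) (sB.mul_left 2), tsum_mul_left, tsum_mul_left, hTH]
    calc (∑' k : ℤ, Y ^ (2 * k * (m : ℤ)) * qp τ ((N : ℝ) * (m : ℝ) * (k : ℝ) ^ 2) *
        ((Y * qp τ ((N : ℝ) * (k : ℝ)) + 1) / (Y * qp τ ((N : ℝ) * (k : ℝ)) - 1)))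
        = ∑' k : ℤ, qp τ (-((N : ℝ) * (m : ℝ) * ((a : ℝ)) ^ 2)) *
            ∑' n₂ : ℤ, GGf m N (a : ℝ) b τ (k, n₂) := tsum_congr key
      _ = qp τ (-((N : ℝ) * (m : ℝ) * ((a : ℝ)) ^ 2)) *
            ∑' k : ℤ, ∑' n₂ : ℤ, GGf m N (a : ℝ) b τ (k, n₂) := tsum_mul_left
      _ = qp τ (-((N : ℝ) * (m : ℝ) * ((a : ℝ)) ^ 2)) *
            ∑' p : ℤ × ℤ, GGf m N (a : ℝ) b τ p := by rw [← Summable.tsum_prod' hG hG.prod_factor]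
      _ = qp τ (-((N : ℝ) * (m : ℝ) * ((a : ℝ)) ^ 2)) *
            (-2 * (∑' p : ℤ × ℤ, if 0 ≤ p.1 ∧ 0 ≤ p.2 then CCf m N (a : ℝ) b τ p else 0)
            + 2 * (∑' p : ℤ × ℤ, if p.1 < 0 ∧ p.2 < 0 then CCf m N (a : ℝ) b τ p else 0)
            + (∑' n : ℤ, thf m N (a : ℝ) b τ n)) := by rw [hsplitG]
      _ = -2 * qp τ (-((N : ℝ) * (m : ℝ) * ((a : ℝ)) ^ 2)) *
            ((∑' p : ℤ × ℤ, if 0 ≤ p.1 ∧ 0 ≤ p.2 then CCf m N (a : ℝ) b τ p else 0)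
            - (∑' p : ℤ × ℤ, if p.1 < 0 ∧ p.2 < 0 then CCf m N (a : ℝ) b τ p else 0)) +
            qp τ (-((N : ℝ) * (m : ℝ) * ((a : ℝ)) ^ 2)) *
            (∑' n : ℤ, thf m N (a : ℝ) b τ n) := by ring
end
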